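/- Let G be a connected non-degenerate trigraph and let G' be an optimal antithickening of G with thickening map I. Then for any semiadjacent pair of vertices a, b of G', either |I(a)| = |I(b)| = 1 and the unique vertices of I(a) and I(b) are semiadjacent in G, or (I(a), I(b)) is a square-connected homogeneous pair of strong cliques of G. -/

import Mathlib

/-- A trigraph on a vertex type `V`: a symmetric adjacency function with values in
`{1, 0, -1}`, zero on the diagonal, such that semiedges form a matching. -/
structure Trigraph (V : Type) where
  θ : V → V → ℤ
  range_mem : ∀ u v, θ u v = 1 ∨ θ u v = 0 ∨ θ u v = -1
  symm : ∀ u v, θ u v = θ v u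
  refl_zero : ∀ v, θ v v = 0
  semi_matching : ∀ u v w : V, u ≠ v → u ≠ w → v ≠ w → θ u v = 0 → θ u w ≠ 0

namespace Trigraph

variable {V V' V'' : Type}

/-- `u` and `v` are strongly adjacent. -/
def StrongAdj (G : Trigraph V) (u v : V) : Prop := G.θ u v = 1

/-- Distinct `u` and `v` are semiadjacent. -/
def SemiAdj (G : Trigraph V) (u v : V) : Prop := u ≠ v ∧ G.θ u v = 0

/-- Distinct `u` and `v` are adjacent. -/
def Adj (G : Trigraph V) (u v : V) : Prop := u ≠ v ∧ (G.θ u v = 1 ∨ G.θ u v = 0)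

/-- Distinct `u` and `v` are antiadjacent. -/
def AntiAdj (G : Trigraph V) (u v : V) : Prop := u ≠ v ∧ (G.θ u v = 0 ∨ G.θ u v = -1)

/-- `u` and `v` are strongly antiadjacent. -/
def StrongAntiAdj (G : Trigraph V) (u v : V) : Prop := G.θ u v = -1

/-- `X` is strongly complete to `Y`. -/
def StronglyComplete (G : Trigraph V) (X Y : Set V) : Prop :=
  ∀ u ∈ X, ∀ v ∈ Y, G.StrongAdj u v

/-- `X` is strongly anticomplete to `Y`. -/
def StronglyAnticomplete (G : Trigraph V) (X Y : Set V) : Prop :=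
  ∀ u ∈ X, ∀ v ∈ Y, G.StrongAntiAdj u v

/-- A strong clique: pairwise strongly adjacent vertices. -/
def IsStrongClique (G : Trigraph V) (K : Set V) : Prop := K.Pairwise G.StrongAdj

/-- A stable set: pairwise antiadjacent vertices. -/
def IsStableSet (G : Trigraph V) (S : Set V) : Prop := S.Pairwise G.AntiAdj

/-- The neighbourhood of a vertex: the set of vertices adjacent to it. -/
def neighborhood (G : Trigraph V) (v : V) : Set V := {u | G.Adj v u}

/-- Claw-free: no vertex has three pairwise antiadjacent vertices in its neighbourhood. -/
def ClawFree (G : Trigraph V) : Prop :=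
  ¬ ∃ v a b c : V, G.Adj v a ∧ G.Adj v b ∧ G.Adj v c ∧
    G.AntiAdj a b ∧ G.AntiAdj a c ∧ G.AntiAdj b c

/-- Cobipartite: the vertex set is the union of two strong cliques. -/
def Cobipartite (G : Trigraph V) : Prop :=
  ∃ K1 K2 : Set V, G.IsStrongClique K1 ∧ G.IsStrongClique K2 ∧ K1 ∪ K2 = Set.univ

/-- Quasi-line: the neighbourhood of every vertex is the union of two strong cliques. -/
def QuasiLine (G : Trigraph V) : Prop :=
  ∀ v : V, ∃ K1 K2 : Set V, G.IsStrongClique K1 ∧ G.IsStrongClique K2 ∧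
    G.neighborhood v = K1 ∪ K2

/-- Connected: any two vertices are joined by a sequence of consecutively adjacent vertices. -/
def Connected (G : Trigraph V) : Prop :=
  ∀ u v : V, Relation.ReflTransGen G.Adj u v

/-- Non-degenerate: quasi-line and not cobipartite, or claw-free with stability number ≥ 3. -/
def NonDegenerate (G : Trigraph V) : Prop :=
  (G.QuasiLine ∧ ¬ G.Cobipartite) ∨
  (G.ClawFree ∧ ∃ S : Set V, G.IsStableSet S ∧ 3 ≤ S.ncard)

/-- A homogeneous set: `|V| > |X| ≥ 2` and every vertex outside `X` is strongly complete
or strongly anticomplete to `X`. -/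
def HomogeneousSet (G : Trigraph V) (X : Set V) : Prop :=
  2 ≤ X.ncard ∧ X ≠ Set.univ ∧
  ∀ v ∉ X, G.StronglyComplete {v} X ∨ G.StronglyAnticomplete {v} X

/-- `v1 v2 v3 v4` is a square: the pairs `v1v3`, `v2v4` are antiadjacent and the other
four pairs are adjacent. -/
def IsSquare (G : Trigraph V) (v1 v2 v3 v4 : V) : Prop :=
  G.AntiAdj v1 v3 ∧ G.AntiAdj v2 v4 ∧
  G.Adj v1 v2 ∧ G.Adj v2 v3 ∧ G.Adj v3 v4 ∧ G.Adj v4 v1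

/-- `X` contains a square. -/
def HasSquareIn (G : Trigraph V) (X : Set V) : Prop :=
  ∃ v1 v2 v3 v4 : V, G.IsSquare v1 v2 v3 v4 ∧ ({v1, v2, v3, v4} : Set V) ⊆ X

/-- Homogeneous pair of strong cliques `(A, B)`. -/
def HPOSC (G : Trigraph V) (A B : Set V) : Prop :=
  A.Nonempty ∧ B.Nonempty ∧ Disjoint A B ∧
  G.IsStrongClique A ∧ G.IsStrongClique B ∧
  ¬ (∃ a b : V, A = {a} ∧ B = {b}) ∧
  ∀ v ∉ A ∪ B,
    (G.StronglyComplete {v} A ∨ G.StronglyAnticomplete {v} A) ∧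
    (G.StronglyComplete {v} B ∨ G.StronglyAnticomplete {v} B)

/-- Deletion-minimal homogeneous pair of strong cliques. -/
def DeletionMinimal (G : Trigraph V) (A B : Set V) : Prop :=
  G.HPOSC A B ∧ G.HasSquareIn (A ∪ B) ∧
  (∀ a ∈ A, ¬ G.StronglyComplete {a} B ∧ ¬ G.StronglyAnticomplete {a} B) ∧
  (∀ b ∈ B, ¬ G.StronglyComplete {b} A ∧ ¬ G.StronglyAnticomplete {b} A)

/-- There is a square contained in `X` intersecting both `S1` and `S2`. -/
def SquareMeets (G : Trigraph V) (X S1 S2 : Set V) : Prop :=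
  ∃ v1 v2 v3 v4 : V, G.IsSquare v1 v2 v3 v4 ∧ ({v1, v2, v3, v4} : Set V) ⊆ X ∧
    (({v1, v2, v3, v4} : Set V) ∩ S1).Nonempty ∧
    (({v1, v2, v3, v4} : Set V) ∩ S2).Nonempty

/-- Square-connected homogeneous pair of strong cliques. -/
def SquareConnected (G : Trigraph V) (A B : Set V) : Prop :=
  G.HPOSC A B ∧
  (∀ A' A'' : Set V, A'.Nonempty → A''.Nonempty → A' ∪ A'' = A → Disjoint A' A'' →
    G.SquareMeets (A ∪ B) A' A'') ∧
  (∀ B' B'' : Set V, B'.Nonempty → B''.Nonempty → B' ∪ B'' = B → Disjoint B' B'' →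
    G.SquareMeets (A ∪ B) B' B'')

/-- Inclusion-maximal square-connected homogeneous pair of strong cliques. -/
def MaxSquareConnected (G : Trigraph V) (A B : Set V) : Prop :=
  G.SquareConnected A B ∧
  ∀ A' B' : Set V, G.SquareConnected A' B' → A ⊆ A' → B ⊆ B' → A' = A ∧ B' = B

/-- Two homogeneous pairs have skew intersection if a part of one intersects both
parts of the other. -/
def SkewIntersection (A1 B1 A2 B2 : Set V) : Prop :=
  ((A1 ∩ A2).Nonempty ∧ (A1 ∩ B2).Nonempty) ∨
  ((B1 ∩ A2).Nonempty ∧ (B1 ∩ B2).Nonempty) ∨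
  ((A2 ∩ A1).Nonempty ∧ (A2 ∩ B1).Nonempty) ∨
  ((B2 ∩ A1).Nonempty ∧ (B2 ∩ B1).Nonempty)

/-- Laminar: contains no square-connected homogeneous pair of strong cliques. -/
def Laminar (G : Trigraph V) : Prop := ¬ ∃ A B : Set V, G.SquareConnected A B

/-- `G` is a thickening of `G'` via the map `I` (equivalently, `G'` is an antithickening
of `G`): the `I v` are nonempty strong cliques partitioning `V(G)` respecting adjacency. -/
def IsThickening (G : Trigraph V) (G' : Trigraph V') (I : V' → Set V) : Prop :=
  (∀ v : V', (I v).Nonempty ∧ G.IsStrongClique (I v)) ∧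
  (∀ u v : V', u ≠ v → Disjoint (I u) (I v)) ∧
  (⋃ v : V', I v) = Set.univ ∧
  ∀ u v : V', u ≠ v →
    (G'.StrongAdj u v → G.StronglyComplete (I u) (I v)) ∧
    (G'.StrongAntiAdj u v → G.StronglyAnticomplete (I u) (I v)) ∧
    (G'.SemiAdj u v →
      ¬ G.StronglyComplete (I u) (I v) ∧ ¬ G.StronglyAnticomplete (I u) (I v))

/-- `G'` (with thickening map `I`) is an optimal antithickening of `G`: it is a laminar
antithickening with the maximum possible number of vertices. -/
def OptimalAntithickening (G : Trigraph V) (G' : Trigraph V') (I : V' → Set V) : Prop :=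
  G.IsThickening G' I ∧ G'.Laminar ∧
  ∀ (W : Type) (H : Trigraph W) (J : W → Set V),
    G.IsThickening H J → H.Laminar → Nat.card W ≤ Nat.card V'

/-- Isomorphism of trigraphs. -/
def Isomorphic (G1 : Trigraph V) (G2 : Trigraph V') : Prop :=
  ∃ f : V ≃ V', ∀ u v : V, G2.θ (f u) (f v) = G1.θ u v

namespace Aux16

open Trigraph

variable {V V' : Type}

lemma adj_symm {G : Trigraph V} {u v : V} (h : G.Adj u v) : G.Adj v u :=
  ⟨h.1.symm, by rw [G.symm]; exact h.2⟩

lemma antiAdj_symm {G : Trigraph V} {u v : V} (h : G.AntiAdj u v) : G.AntiAdj v u :=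
  ⟨h.1.symm, by rw [G.symm]; exact h.2⟩

lemma antiAdj_not_same_clique {G : Trigraph V} {K : Set V} (hK : G.IsStrongClique K)
    {u v : V} (h : G.AntiAdj u v) (hu : u ∈ K) : v ∉ K := by
  intro hv
  have h1 : G.θ u v = 1 := hK hu hv h.1
  rcases h.2 with h2 | h2 <;> omega

lemma sc_mono {G : Trigraph V} {X Y X' Y' : Set V} (h : G.StronglyComplete X Y)
    (hX : X' ⊆ X) (hY : Y' ⊆ Y) : G.StronglyComplete X' Y' :=
  fun x hx y hy => h x (hX hx) y (hY hy)

lemma sa_mono {G : Trigraph V} {X Y X' Y' : Set V} (h : G.StronglyAnticomplete X Y)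
    (hX : X' ⊆ X) (hY : Y' ⊆ Y) : G.StronglyAnticomplete X' Y' :=
  fun x hx y hy => h x (hX hx) y (hY hy)

lemma sc_symm {G : Trigraph V} {X Y : Set V} (h : G.StronglyComplete X Y) :
    G.StronglyComplete Y X := fun y hy x hx => by
  show G.θ y x = 1
  rw [G.symm]
  exact h x hx y hy

lemma sa_symm {G : Trigraph V} {X Y : Set V} (h : G.StronglyAnticomplete X Y) :
    G.StronglyAnticomplete Y X := fun y hy x hx => by
  show G.θ y x = -1
  rw [G.symm]
  exact h x hx y hy

/-- Any square inside the union of two disjoint strong cliques has exactly two vertices in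
each, in a canonical pattern. -/
lemma square_split {G : Trigraph V} {P Q : Set V} (hP : G.IsStrongClique P)
    (hQ : G.IsStrongClique Q) {v1 v2 v3 v4 : V} (hsq : G.IsSquare v1 v2 v3 v4)
    (hsub : ({v1, v2, v3, v4} : Set V) ⊆ P ∪ Q) :
    ∃ p1 p2 q1 q2 : V, p1 ∈ P ∧ p2 ∈ P ∧ q1 ∈ Q ∧ q2 ∈ Q ∧ p1 ≠ p2 ∧ q1 ≠ q2 ∧
      G.AntiAdj p1 q1 ∧ G.AntiAdj p2 q2 ∧ G.Adj p1 q2 ∧ G.Adj p2 q1 ∧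
      ({v1, v2, v3, v4} : Set V) = {p1, p2, q1, q2} := by
  obtain ⟨h13, h24, h12, h23, h34, h41⟩ := hsq
  have m1 : v1 ∈ P ∪ Q := hsub (by simp)
  have m2 : v2 ∈ P ∪ Q := hsub (by simp)
  have m3 : v3 ∈ P ∪ Q := hsub (by simp)
  have m4 : v4 ∈ P ∪ Q := hsub (by simp)
  rcases m1 with h1P | h1Q
  · have h3Q : v3 ∈ Q := m3.resolve_left (antiAdj_not_same_clique hP h13 h1P)
    rcases m2 with h2P | h2Q
    · have h4Q : v4 ∈ Q := m4.resolve_left (antiAdj_not_same_clique hP h24 h2P)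
      exact ⟨v1, v2, v3, v4, h1P, h2P, h3Q, h4Q, h12.1, h34.1, h13, h24,
        adj_symm h41, h23, rfl⟩
    · have h4P : v4 ∈ P := m4.resolve_right (antiAdj_not_same_clique hQ h24 h2Q)
      exact ⟨v1, v4, v3, v2, h1P, h4P, h3Q, h2Q, h41.1.symm, h23.1.symm, h13,
        antiAdj_symm h24, h12, adj_symm h34, by ext x; simp; tauto⟩
  · have h3P : v3 ∈ P := m3.resolve_right (antiAdj_not_same_clique hQ h13 h1Q)
    rcases m2 with h2P | h2Q
    · have h4Q : v4 ∈ Q := m4.resolve_left (antiAdj_not_same_clique hP h24 h2P)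
      exact ⟨v3, v2, v1, v4, h3P, h2P, h1Q, h4Q, h23.1.symm, h41.1.symm,
        antiAdj_symm h13, h24, h34, adj_symm h12, by ext x; simp; tauto⟩
    · have h4P : v4 ∈ P := m4.resolve_right (antiAdj_not_same_clique hQ h24 h2Q)
      exact ⟨v3, v4, v1, v2, h3P, h4P, h1Q, h2Q, h34.1, h12.1,
        antiAdj_symm h13, antiAdj_symm h24, adj_symm h23, h41, by ext x; simp; tauto⟩

lemma hposc_symm {G : Trigraph V} {A B : Set V} (h : G.HPOSC A B) : G.HPOSC B A := by
  obtain ⟨h1, h2, h3, h4, h5, h6, h7⟩ := h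
  refine ⟨h2, h1, h3.symm, h5, h4, fun ⟨x, y, hx, hy⟩ => h6 ⟨y, x, hy, hx⟩, fun v hv => ?_⟩
  rw [Set.union_comm] at hv
  exact ⟨(h7 v hv).2, (h7 v hv).1⟩

lemma sqConn_symm {G : Trigraph V} {A B : Set V} (h : G.SquareConnected A B) :
    G.SquareConnected B A := by
  obtain ⟨h1, h2, h3⟩ := h
  refine ⟨hposc_symm h1, fun B' B'' hB' hB'' hu hd => ?_, fun A' A'' hA' hA'' hu hd => ?_⟩
  · have := h3 B' B'' hB' hB'' hu hd; rwa [Set.union_comm] at this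
  · have := h2 A' A'' hA' hA'' hu hd; rwa [Set.union_comm] at this

lemma singleton_partition {Q : Set V} {q q' : V} (hq : q ∈ Q) (hq' : q' ∈ Q) (hne : q' ≠ q) :
    ({q} : Set V).Nonempty ∧ (Q \ {q}).Nonempty ∧ ({q} : Set V) ∪ (Q \ {q}) = Q ∧
      Disjoint ({q} : Set V) (Q \ {q}) := by
  refine ⟨⟨q, rfl⟩, ⟨q', hq', hne⟩, ?_, ?_⟩
  · rw [Set.singleton_union, Set.insert_diff_singleton, Set.insert_eq_self.mpr hq]
  · rw [Set.disjoint_left]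
    rintro x rfl hx
    exact hx.2 rfl

/-- In a square-connected pair, both sides have at least two elements. -/
lemma sqConn_two {G : Trigraph V} {P Q : Set V} (h : G.SquareConnected P Q) :
    (∃ p ∈ P, ∃ p' ∈ P, p ≠ p') ∧ (∃ q ∈ Q, ∃ q' ∈ Q, q ≠ q') := by
  obtain ⟨⟨hPne, hQne, hdisj, hPcl, hQcl, hns, _⟩, hA, hB⟩ := h
  have key : ∀ S1 S2 : Set V, G.SquareMeets (P ∪ Q) S1 S2 →
      (∃ p ∈ P, ∃ p' ∈ P, p ≠ p') ∧ (∃ q ∈ Q, ∃ q' ∈ Q, q ≠ q') := by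
    rintro S1 S2 ⟨w1, w2, w3, w4, hsq, hsub, -, -⟩
    obtain ⟨p1, p2, q1, q2, hp1, hp2, hq1, hq2, hpp, hqq, -⟩ :=
      square_split hPcl hQcl hsq hsub
    exact ⟨⟨p1, hp1, p2, hp2, hpp⟩, ⟨q1, hq1, q2, hq2, hqq⟩⟩
  by_cases hP2 : ∃ p ∈ P, ∃ p' ∈ P, p ≠ p'
  · obtain ⟨p, hp, p', hp', hne⟩ := hP2
    obtain ⟨hs1, hs2, hs3, hs4⟩ := singleton_partition hp hp' (Ne.symm hne)
    exact key _ _ (hA {p} (P \ {p}) hs1 hs2 hs3 hs4)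
  · by_cases hQ2 : ∃ q ∈ Q, ∃ q' ∈ Q, q ≠ q'
    · obtain ⟨q, hq, q', hq', hne⟩ := hQ2
      obtain ⟨hs1, hs2, hs3, hs4⟩ := singleton_partition hq hq' (Ne.symm hne)
      exact key _ _ (hB {q} (Q \ {q}) hs1 hs2 hs3 hs4)
    · exfalso
      push_neg at hP2 hQ2
      obtain ⟨p0, hp0⟩ := hPne
      obtain ⟨q0, hq0⟩ := hQne
      refine hns ⟨p0, q0, ?_, ?_⟩
      · ext x; simp only [Set.mem_singleton_iff]
        exact ⟨fun hx => hP2 x hx p0 hp0, fun hx => hx ▸ hp0⟩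
      · ext x; simp only [Set.mem_singleton_iff]
        exact ⟨fun hx => hQ2 x hx q0 hq0, fun hx => hx ▸ hq0⟩

/-- Every vertex of `P` lies in some square within `P ∪ Q`, giving an antiadjacent and an
adjacent partner in `Q`. -/
lemma sqConn_partner {G : Trigraph V} {P Q : Set V} (h : G.SquareConnected P Q)
    {x : V} (hx : x ∈ P) :
    ∃ qh qs : V, qh ∈ Q ∧ qs ∈ Q ∧ qh ≠ qs ∧ G.AntiAdj x qh ∧ G.Adj x qs := by
  obtain ⟨⟨u, hu, u', hu', huu⟩, -⟩ := sqConn_two h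
  have hex : ∃ p' ∈ P, p' ≠ x := by
    by_cases hux : u = x
    · exact ⟨u', hu', fun hh => huu (hux.trans hh.symm)⟩
    · exact ⟨u, hu, hux⟩
  obtain ⟨p', hp', hpne⟩ := hex
  obtain ⟨hs1, hs2, hs3, hs4⟩ := singleton_partition hx hp' hpne
  obtain ⟨w1, w2, w3, w4, hsq, hsub, hm1, -⟩ := h.2.1 {x} (P \ {x}) hs1 hs2 hs3 hs4
  obtain ⟨p1, p2, q1, q2, hp1, hp2, hq1, hq2, hpp, hqq, ha1, ha2, hd1, hd2, hseteq⟩ :=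
    square_split h.1.2.2.2.1 h.1.2.2.2.2.1 hsq hsub
  obtain ⟨y, hyS, hyx⟩ := hm1
  rw [Set.mem_singleton_iff] at hyx
  subst hyx
  rw [hseteq] at hyS
  have hdisj : Disjoint P Q := h.1.2.2.1
  simp only [Set.mem_insert_iff, Set.mem_singleton_iff] at hyS
  rcases hyS with rfl | rfl | rfl | rfl
  · exact ⟨q1, q2, hq1, hq2, hqq, ha1, hd1⟩
  · exact ⟨q2, q1, hq2, hq1, hqq.symm, ha2, hd2⟩
  · exact absurd hq1 fun hh => hdisj.ne_of_mem hx hh rfl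
  · exact absurd hq2 fun hh => hdisj.ne_of_mem hx hh rfl

/-- If two distinct vertices lie in a common square, they are either antiadjacent (diagonal)
or they form a side, with the two other vertices in the canonical pattern. -/
lemma square_pair {W : Type} {H : Trigraph W} {v1 v2 v3 v4 x y : W}
    (hsq : H.IsSquare v1 v2 v3 v4)
    (hx : x ∈ ({v1, v2, v3, v4} : Set W)) (hy : y ∈ ({v1, v2, v3, v4} : Set W))
    (hxy : x ≠ y) :
    H.AntiAdj x y ∨ H.AntiAdj y x ∨
    ∃ z w : W, z ∈ ({v1, v2, v3, v4} : Set W) ∧ w ∈ ({v1, v2, v3, v4} : Set W) ∧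
      z ≠ x ∧ z ≠ y ∧ w ≠ x ∧ w ≠ y ∧ z ≠ w ∧
      H.AntiAdj x z ∧ H.Adj y z ∧ H.Adj x w ∧ H.AntiAdj y w := by
  obtain ⟨h13, h24, h12, h23, h34, h41⟩ := hsq
  simp only [Set.mem_insert_iff, Set.mem_singleton_iff] at hx hy
  have m1 : v1 ∈ ({v1, v2, v3, v4} : Set W) := by simp
  have m2 : v2 ∈ ({v1, v2, v3, v4} : Set W) := by simp
  have m3 : v3 ∈ ({v1, v2, v3, v4} : Set W) := by simp
  have m4 : v4 ∈ ({v1, v2, v3, v4} : Set W) := by simp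
  rcases hx with rfl | rfl | rfl | rfl <;> rcases hy with rfl | rfl | rfl | rfl
  · exact absurd rfl hxy
  · refine Or.inr (Or.inr ⟨v3, v4, m3, m4, ?_, ?_, ?_, ?_, ?_, h13, h23, adj_symm h41, h24⟩) <;>
      first | exact h12.1 | exact h12.1.symm | exact h13.1 | exact h13.1.symm | exact h23.1 | exact h23.1.symm | exact h24.1 | exact h24.1.symm | exact h34.1 | exact h34.1.symm | exact h41.1 | exact h41.1.symm
  · exact Or.inl h13
  · refine Or.inr (Or.inr ⟨v3, v2, m3, m2, ?_, ?_, ?_, ?_, ?_, h13, adj_symm h34, h12,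
      antiAdj_symm h24⟩) <;>
      first | exact h12.1 | exact h12.1.symm | exact h13.1 | exact h13.1.symm | exact h23.1 | exact h23.1.symm | exact h24.1 | exact h24.1.symm | exact h34.1 | exact h34.1.symm | exact h41.1 | exact h41.1.symm
  · refine Or.inr (Or.inr ⟨v4, v3, m4, m3, ?_, ?_, ?_, ?_, ?_, h24, adj_symm h41, h23,
      h13⟩) <;>
      first | exact h12.1 | exact h12.1.symm | exact h13.1 | exact h13.1.symm | exact h23.1 | exact h23.1.symm | exact h24.1 | exact h24.1.symm | exact h34.1 | exact h34.1.symm | exact h41.1 | exact h41.1.symm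
  · exact absurd rfl hxy
  · refine Or.inr (Or.inr ⟨v4, v1, m4, m1, ?_, ?_, ?_, ?_, ?_, h24, h34, adj_symm h12,
      antiAdj_symm h13⟩) <;>
      first | exact h12.1 | exact h12.1.symm | exact h13.1 | exact h13.1.symm | exact h23.1 | exact h23.1.symm | exact h24.1 | exact h24.1.symm | exact h34.1 | exact h34.1.symm | exact h41.1 | exact h41.1.symm
  · exact Or.inl h24
  · exact Or.inr (Or.inl h13)
  · refine Or.inr (Or.inr ⟨v1, v4, m1, m4, ?_, ?_, ?_, ?_, ?_, antiAdj_symm h13,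
      adj_symm h12, h34, h24⟩) <;>
      first | exact h12.1 | exact h12.1.symm | exact h13.1 | exact h13.1.symm | exact h23.1 | exact h23.1.symm | exact h24.1 | exact h24.1.symm | exact h34.1 | exact h34.1.symm | exact h41.1 | exact h41.1.symm
  · exact absurd rfl hxy
  · refine Or.inr (Or.inr ⟨v1, v2, m1, m2, ?_, ?_, ?_, ?_, ?_, antiAdj_symm h13, h41,
      adj_symm h23, antiAdj_symm h24⟩) <;>
      first | exact h12.1 | exact h12.1.symm | exact h13.1 | exact h13.1.symm | exact h23.1 | exact h23.1.symm | exact h24.1 | exact h24.1.symm | exact h34.1 | exact h34.1.symm | exact h41.1 | exact h41.1.symm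
  · refine Or.inr (Or.inr ⟨v2, v3, m2, m3, ?_, ?_, ?_, ?_, ?_, antiAdj_symm h24, h12,
      adj_symm h34, h13⟩) <;>
      first | exact h12.1 | exact h12.1.symm | exact h13.1 | exact h13.1.symm | exact h23.1 | exact h23.1.symm | exact h24.1 | exact h24.1.symm | exact h34.1 | exact h34.1.symm | exact h41.1 | exact h41.1.symm
  · exact Or.inr (Or.inl h24)
  · refine Or.inr (Or.inr ⟨v2, v1, m2, m1, ?_, ?_, ?_, ?_, ?_, antiAdj_symm h24,
      adj_symm h23, h41, antiAdj_symm h13⟩) <;>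
      first | exact h12.1 | exact h12.1.symm | exact h13.1 | exact h13.1.symm | exact h23.1 | exact h23.1.symm | exact h24.1 | exact h24.1.symm | exact h34.1 | exact h34.1.symm | exact h41.1 | exact h41.1.symm
  · exact absurd rfl hxy

/-- The generic transfer lemma: a square-connected HPOSC in a refinement `H` of `G'`
(where `μ` is the collapse map) induces one in `G'`, under placement conditions. -/
lemma transfer {W : Type} (G' : Trigraph V') {a b : V'} (hab : G'.SemiAdj a b)
    (H : Trigraph W) (μ : W → V')
    (hsur : ∀ w : V', ∃ u, μ u = w)
    (hθ : ∀ u v : W, μ u ≠ μ v → ¬(μ u = a ∧ μ v = b) → ¬(μ u = b ∧ μ v = a) →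
      H.θ u v = G'.θ (μ u) (μ v))
    (hfib : ∀ u v : W, u ≠ v → μ u = μ v → μ u = a ∨ μ u = b)
    {P Q : Set W} (hPQ : H.SquareConnected P Q)
    (hnofibsq : ∀ v1 v2 v3 v4 : W, H.IsSquare v1 v2 v3 v4 →
      ({v1, v2, v3, v4} : Set W) ⊆ P ∪ Q →
      ∀ u ∈ ({v1, v2, v3, v4} : Set W), ∀ w ∈ ({v1, v2, v3, v4} : Set W),
        u ≠ w → μ u ≠ μ w)
    (hPab : ¬(a ∈ μ '' P ∧ b ∈ μ '' P)) (hQab : ¬(a ∈ μ '' Q ∧ b ∈ μ '' Q))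
    (hPQa : ¬(a ∈ μ '' P ∧ a ∈ μ '' Q)) (hPQb : ¬(b ∈ μ '' P ∧ b ∈ μ '' Q))
    (houta : a ∉ μ '' P ∪ μ '' Q → b ∉ μ '' P ∪ μ '' Q)
    (houtb : b ∉ μ '' P ∪ μ '' Q → a ∉ μ '' P ∪ μ '' Q) :
    G'.SquareConnected (μ '' P) (μ '' Q) := by
  have hab0 : G'.θ a b = 0 := hab.2
  have hAdj : ∀ u v : W, μ u ≠ μ v → H.Adj u v → G'.Adj (μ u) (μ v) := by
    intro u v hne h
    by_cases hp : μ u = a ∧ μ v = b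
    · exact ⟨hne, Or.inr (by rw [hp.1, hp.2]; exact hab0)⟩
    · by_cases hq : μ u = b ∧ μ v = a
      · refine ⟨hne, Or.inr ?_⟩
        rw [hq.1, hq.2, G'.symm]; exact hab0
      · exact ⟨hne, by rw [← hθ u v hne hp hq]; exact h.2⟩
  have hAnti : ∀ u v : W, μ u ≠ μ v → H.AntiAdj u v → G'.AntiAdj (μ u) (μ v) := by
    intro u v hne h
    by_cases hp : μ u = a ∧ μ v = b
    · exact ⟨hne, Or.inl (by rw [hp.1, hp.2]; exact hab0)⟩
    · by_cases hq : μ u = b ∧ μ v = a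
      · refine ⟨hne, Or.inl ?_⟩
        rw [hq.1, hq.2, G'.symm]; exact hab0
      · exact ⟨hne, by rw [← hθ u v hne hp hq]; exact h.2⟩
  have hSq : ∀ v1 v2 v3 v4 : W, H.IsSquare v1 v2 v3 v4 →
      ({v1, v2, v3, v4} : Set W) ⊆ P ∪ Q →
      G'.IsSquare (μ v1) (μ v2) (μ v3) (μ v4) := by
    intro v1 v2 v3 v4 hsq hsub
    have hd := hnofibsq v1 v2 v3 v4 hsq hsub
    have m1 : v1 ∈ ({v1, v2, v3, v4} : Set W) := by simp
    have m2 : v2 ∈ ({v1, v2, v3, v4} : Set W) := by simp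
    have m3 : v3 ∈ ({v1, v2, v3, v4} : Set W) := by simp
    have m4 : v4 ∈ ({v1, v2, v3, v4} : Set W) := by simp
    obtain ⟨h13, h24, h12, h23, h34, h41⟩ := hsq
    exact ⟨hAnti _ _ (hd _ m1 _ m3 h13.1) h13, hAnti _ _ (hd _ m2 _ m4 h24.1) h24,
      hAdj _ _ (hd _ m1 _ m2 h12.1) h12, hAdj _ _ (hd _ m2 _ m3 h23.1) h23,
      hAdj _ _ (hd _ m3 _ m4 h34.1) h34, hAdj _ _ (hd _ m4 _ m1 h41.1) h41⟩
  have hdisjPQ : Disjoint P Q := hPQ.1.2.2.1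
  have hdisj' : Disjoint (μ '' P) (μ '' Q) := by
    rw [Set.disjoint_left]
    rintro x ⟨u, hu, rfl⟩ ⟨v, hv, hv2⟩
    have huv : u ≠ v := fun h => (hdisjPQ.ne_of_mem hu (h ▸ hv)) rfl
    rcases hfib u v huv hv2.symm with h | h
    · exact hPQa ⟨⟨u, hu, h⟩, ⟨v, hv, hv2.trans h⟩⟩
    · exact hPQb ⟨⟨u, hu, h⟩, ⟨v, hv, hv2.trans h⟩⟩
  have hPcl' : G'.IsStrongClique (μ '' P) := by
    rintro x ⟨u, hu, rfl⟩ y ⟨v, hv, rfl⟩ hxy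
    have huv : u ≠ v := fun h => hxy (by rw [h])
    have hstr : H.θ u v = 1 := hPQ.1.2.2.2.1 hu hv huv
    by_cases hp : μ u = a ∧ μ v = b
    · exact absurd ⟨⟨u, hu, hp.1⟩, ⟨v, hv, hp.2⟩⟩ hPab
    · by_cases hq : μ u = b ∧ μ v = a
      · exact absurd ⟨⟨v, hv, hq.2⟩, ⟨u, hu, hq.1⟩⟩ hPab
      · show G'.θ _ _ = 1
        rw [← hθ u v hxy hp hq]; exact hstr
  have hQcl' : G'.IsStrongClique (μ '' Q) := by
    rintro x ⟨u, hu, rfl⟩ y ⟨v, hv, rfl⟩ hxy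
    have huv : u ≠ v := fun h => hxy (by rw [h])
    have hstr : H.θ u v = 1 := hPQ.1.2.2.2.2.1 hu hv huv
    by_cases hp : μ u = a ∧ μ v = b
    · exact absurd ⟨⟨u, hu, hp.1⟩, ⟨v, hv, hp.2⟩⟩ hQab
    · by_cases hq : μ u = b ∧ μ v = a
      · exact absurd ⟨⟨v, hv, hq.2⟩, ⟨u, hu, hq.1⟩⟩ hQab
      · show G'.θ _ _ = 1
        rw [← hθ u v hxy hp hq]; exact hstr
  have hns : ¬∃ x y : V', μ '' P = {x} ∧ μ '' Q = {y} := by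
    rintro ⟨x, y, hPx, hQy⟩
    obtain ⟨⟨p, hp, p', hp', hne⟩, -⟩ := sqConn_two hPQ
    obtain ⟨hs1, hs2, hs3, hs4⟩ := singleton_partition hp hp' (Ne.symm hne)
    obtain ⟨w1, w2, w3, w4, hsq, hsub, hm1, hm2⟩ := hPQ.2.1 {p} (P \ {p}) hs1 hs2 hs3 hs4
    obtain ⟨z, hzS, hz⟩ := hm1
    rw [Set.mem_singleton_iff] at hz
    subst hz
    obtain ⟨w, hwS, hwP, hwp⟩ := hm2
    have hμz : μ z = x := by
      have := Set.mem_image_of_mem μ hp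
      rwa [hPx, Set.mem_singleton_iff] at this
    have hμw : μ w = x := by
      have := Set.mem_image_of_mem μ hwP
      rwa [hPx, Set.mem_singleton_iff] at this
    exact hnofibsq w1 w2 w3 w4 hsq hsub z hzS w hwS (fun h => hwp (by rw [← h]; rfl))
      (by rw [hμz, hμw])
  have hhom : ∀ v' ∉ μ '' P ∪ μ '' Q,
      (G'.StronglyComplete {v'} (μ '' P) ∨ G'.StronglyAnticomplete {v'} (μ '' P)) ∧
      (G'.StronglyComplete {v'} (μ '' Q) ∨ G'.StronglyAnticomplete {v'} (μ '' Q)) := by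
    intro w hw
    obtain ⟨u0, rfl⟩ := hsur w
    have hu0 : u0 ∉ P ∪ Q := by
      rintro (h | h)
      · exact hw (Or.inl ⟨u0, h, rfl⟩)
      · exact hw (Or.inr ⟨u0, h, rfl⟩)
    have htrans : ∀ v ∈ P ∪ Q, G'.θ (μ u0) (μ v) = H.θ u0 v := by
      intro v hv
      have hμv : μ v ∈ μ '' P ∪ μ '' Q := by
        rcases hv with h | h
        · exact Or.inl ⟨v, h, rfl⟩
        · exact Or.inr ⟨v, h, rfl⟩
      have hne : μ u0 ≠ μ v := fun h => hw (h ▸ hμv)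
      refine (hθ u0 v hne ?_ ?_).symm
      · rintro ⟨h1, h2⟩
        have hbin : b ∈ μ '' P ∪ μ '' Q := h2 ▸ hμv
        exact houta (fun hin => hw (h1 ▸ hin)) hbin
      · rintro ⟨h1, h2⟩
        have hain : a ∈ μ '' P ∪ μ '' Q := h2 ▸ hμv
        exact houtb (fun hin => hw (h1 ▸ hin)) hain
    have hH := hPQ.1.2.2.2.2.2.2 u0 hu0
    constructor
    · rcases hH.1 with h | h
      · left
        rintro z hz y ⟨v, hv, rfl⟩
        rw [Set.mem_singleton_iff] at hz
        subst hz
        show G'.θ _ _ = 1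
        rw [htrans v (Or.inl hv)]
        exact h u0 rfl v hv
      · right
        rintro z hz y ⟨v, hv, rfl⟩
        rw [Set.mem_singleton_iff] at hz
        subst hz
        show G'.θ _ _ = -1
        rw [htrans v (Or.inl hv)]
        exact h u0 rfl v hv
    · rcases hH.2 with h | h
      · left
        rintro z hz y ⟨v, hv, rfl⟩
        rw [Set.mem_singleton_iff] at hz
        subst hz
        show G'.θ _ _ = 1
        rw [htrans v (Or.inr hv)]
        exact h u0 rfl v hv
      · right
        rintro z hz y ⟨v, hv, rfl⟩
        rw [Set.mem_singleton_iff] at hz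
        subst hz
        show G'.θ _ _ = -1
        rw [htrans v (Or.inr hv)]
        exact h u0 rfl v hv
  have hmeets : ∀ (R : Set W), (R = P ∨ R = Q) → ∀ (X Y : Set V'),
      X.Nonempty → Y.Nonempty → X ∪ Y = μ '' R → Disjoint X Y →
      G'.SquareMeets (μ '' P ∪ μ '' Q) X Y := by
    rintro R hR X Y hX hY hXY hdXY
    have hsqm : H.SquareMeets (P ∪ Q) (R ∩ μ ⁻¹' X) (R ∩ μ ⁻¹' Y) := by
      have h1 : (R ∩ μ ⁻¹' X).Nonempty := by
        obtain ⟨x, hx⟩ := hX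
        have : x ∈ μ '' R := hXY ▸ Or.inl hx
        obtain ⟨u, hu, rfl⟩ := this
        exact ⟨u, hu, hx⟩
      have h2 : (R ∩ μ ⁻¹' Y).Nonempty := by
        obtain ⟨y, hy⟩ := hY
        have : y ∈ μ '' R := hXY ▸ Or.inr hy
        obtain ⟨u, hu, rfl⟩ := this
        exact ⟨u, hu, hy⟩
      have h3 : (R ∩ μ ⁻¹' X) ∪ (R ∩ μ ⁻¹' Y) = R := by
        ext u
        simp only [Set.mem_union, Set.mem_inter_iff, Set.mem_preimage]
        constructor
        · rintro (⟨h, -⟩ | ⟨h, -⟩) <;> exact h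
        · intro hu
          have : μ u ∈ X ∪ Y := hXY ▸ Set.mem_image_of_mem μ hu
          rcases this with h | h
          · exact Or.inl ⟨hu, h⟩
          · exact Or.inr ⟨hu, h⟩
      have h4 : Disjoint (R ∩ μ ⁻¹' X) (R ∩ μ ⁻¹' Y) := by
        rw [Set.disjoint_left]
        rintro u ⟨-, hu1⟩ ⟨-, hu2⟩
        exact (hdXY.ne_of_mem hu1 hu2) rfl
      rcases hR with rfl | rfl
      · exact hPQ.2.1 _ _ h1 h2 h3 h4
      · exact hPQ.2.2 _ _ h1 h2 h3 h4
    obtain ⟨w1, w2, w3, w4, hsq, hsub, hm1, hm2⟩ := hsqm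
    refine ⟨μ w1, μ w2, μ w3, μ w4, hSq w1 w2 w3 w4 hsq hsub, ?_, ?_, ?_⟩
    · intro x hx
      simp only [Set.mem_insert_iff, Set.mem_singleton_iff] at hx
      have hmem : ∀ v ∈ ({w1, w2, w3, w4} : Set W), μ v ∈ μ '' P ∪ μ '' Q := by
        intro v hv
        rcases hsub hv with h | h
        · exact Or.inl ⟨v, h, rfl⟩
        · exact Or.inr ⟨v, h, rfl⟩
      rcases hx with rfl | rfl | rfl | rfl
      · exact hmem w1 (by simp)
      · exact hmem w2 (by simp)
      · exact hmem w3 (by simp)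
      · exact hmem w4 (by simp)
    · obtain ⟨u, huS, huR, huX⟩ := hm1
      refine ⟨μ u, ?_, huX⟩
      simp only [Set.mem_insert_iff, Set.mem_singleton_iff] at huS ⊢
      rcases huS with rfl | rfl | rfl | rfl
      · exact Or.inl rfl
      · exact Or.inr (Or.inl rfl)
      · exact Or.inr (Or.inr (Or.inl rfl))
      · exact Or.inr (Or.inr (Or.inr rfl))
    · obtain ⟨u, huS, huR, huY⟩ := hm2
      refine ⟨μ u, ?_, huY⟩
      simp only [Set.mem_insert_iff, Set.mem_singleton_iff] at huS ⊢
      rcases huS with rfl | rfl | rfl | rfl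
      · exact Or.inl rfl
      · exact Or.inr (Or.inl rfl)
      · exact Or.inr (Or.inr (Or.inl rfl))
      · exact Or.inr (Or.inr (Or.inr rfl))
  exact ⟨⟨hPQ.1.1.image μ, hPQ.1.2.1.image μ, hdisj', hPcl', hQcl', hns, hhom⟩,
    fun X Y hX hY hXY hd => hmeets P (Or.inl rfl) X Y hX hY hXY hd,
    fun X Y hX hY hXY hd => hmeets Q (Or.inr rfl) X Y hX hY hXY hd⟩

section FCL

variable [Fintype V] {G : Trigraph V} {A B : Set V}

/-- Core construction: given a crossing-free partition `(A1, A2)` whose `U1` is proper,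
produce a double split with the mixed / pure block pattern. -/
lemma fcl2_core (G : Trigraph V) (A B A1 A2 : Set V)
    (hA1 : A1.Nonempty) (hAu : A1 ∪ A2 = A) (hA1A : A1 ⊆ A) (hA2A : A2 ⊆ A)
    (hAd : Disjoint A1 A2)
    (hcomp : ∀ x1 ∈ A1, ∀ x2 ∈ A2,
      (∀ y ∈ B, G.θ x1 y ≠ -1 → G.θ x2 y = 1) ∨ (∀ y ∈ B, G.θ x2 y ≠ -1 → G.θ x1 y = 1))
    (hrowmix : ∀ x ∈ A, (∃ y ∈ B, G.θ x y ≠ 1) ∧ (∃ y ∈ B, G.θ x y ≠ -1))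
    (hcolmix : ∀ y ∈ B, (∃ x ∈ A, G.θ x y ≠ 1) ∧ (∃ x ∈ A, G.θ x y ≠ -1))
    (hy0 : ∃ y0 ∈ B, ∀ x ∈ A1, G.θ x y0 = -1) :
    ∃ Ah1 Ah2 Bh1 Bh2 : Set V,
      Ah1.Nonempty ∧ Ah2.Nonempty ∧ Ah1 ∪ Ah2 = A ∧ Disjoint Ah1 Ah2 ∧
      Bh1.Nonempty ∧ Bh2.Nonempty ∧ Bh1 ∪ Bh2 = B ∧ Disjoint Bh1 Bh2 ∧
      (∀ x ∈ Ah1, ∀ y ∈ Bh2, G.θ x y = -1) ∧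
      (∀ x ∈ Ah2, ∀ y ∈ Bh1, G.θ x y = 1) ∧
      ((∃ x ∈ Ah1, ∃ y ∈ Bh1, G.θ x y ≠ 1) ∧ (∃ x ∈ Ah1, ∃ y ∈ Bh1, G.θ x y ≠ -1)) ∧
      ((∃ x ∈ Ah2, ∃ y ∈ Bh2, G.θ x y ≠ 1) ∧ (∃ x ∈ Ah2, ∃ y ∈ Bh2, G.θ x y ≠ -1)) := by
  classical
  set U1 : Set V := {y ∈ B | ∃ x ∈ A1, G.θ x y ≠ -1} with hU1def
  obtain ⟨y0, hy0B, hy0U⟩ := hy0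
  have hy0notU : y0 ∉ U1 := by
    rintro ⟨-, x, hx, hθ⟩
    exact hθ (hy0U x hx)
  set T : Set V := {x ∈ A2 | ∃ y ∈ B, y ∉ U1 ∧ G.θ x y ≠ -1} with hTdef
  have hTA2 : T ⊆ A2 := fun x hx => hx.1
  have hTne : T.Nonempty := by
    obtain ⟨x, hxA, hxθ⟩ := (hcolmix y0 hy0B).2
    have hxA2 : x ∈ A2 := by
      rw [← hAu] at hxA
      rcases hxA with h | h
      · exact absurd (hy0U x h) hxθ
      · exact h
    exact ⟨x, hxA2, y0, hy0B, hy0notU, hxθ⟩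
  have keyT : ∀ t ∈ T, ∀ y ∈ U1, G.θ t y = 1 := by
    rintro t ⟨htA2, yt, hytB, hytU, hytθ⟩ y ⟨hyB, x1, hx1, hx1θ⟩
    rcases hcomp x1 hx1 t htA2 with h | h
    · exact h y hyB hx1θ
    · exact absurd ⟨hytB, x1, hx1, fun hh => by rw [h yt hytB hytθ] at hh; norm_num at hh⟩ hytU
  have keyAT : ∀ x ∈ A, x ∉ T → ∀ y ∈ B, y ∉ U1 → G.θ x y = -1 := by
    intro x hxA hxT y hyB hyU
    rw [← hAu] at hxA
    rcases hxA with h | h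
    · by_contra hne
      exact hyU ⟨hyB, x, h, hne⟩
    · by_contra hne
      exact hxT ⟨h, y, hyB, hyU, hne⟩
  have hU1B : U1 ⊆ B := fun y hy => hy.1
  have hA1sub : A1 ⊆ A \ T := fun x hx =>
    ⟨hA1A hx, fun hxT => (hAd.ne_of_mem hx (hTA2 hxT)) rfl⟩
  refine ⟨A \ T, T, U1, B \ U1, ?_, hTne, ?_, Set.disjoint_sdiff_left, ?_, ⟨y0, hy0B, hy0notU⟩,
    ?_, Set.disjoint_sdiff_right, ?_, ?_, ?_, ?_⟩
  · obtain ⟨x, hx⟩ := hA1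
    exact ⟨x, hA1sub hx⟩
  · exact Set.diff_union_of_subset (hTA2.trans hA2A)
  · obtain ⟨x1, hx1⟩ := hA1
    obtain ⟨y, hyB, hyθ⟩ := (hrowmix x1 (hA1A hx1)).2
    exact ⟨y, hyB, x1, hx1, hyθ⟩
  · exact Set.union_diff_cancel hU1B
  · rintro x ⟨hxA, hxT⟩ y ⟨hyB, hyU⟩
    exact keyAT x hxA hxT y hyB hyU
  · intro x hx y hy
    exact keyT x hx y hy
  · constructor
    · by_contra hall
      push_neg at hall
      obtain ⟨x1, hx1⟩ := hA1
      obtain ⟨y, hyB, hyθ⟩ := (hrowmix x1 (hA1A hx1)).2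
      have hyU : y ∈ U1 := ⟨hyB, x1, hx1, hyθ⟩
      obtain ⟨x, hxA, hxθ⟩ := (hcolmix y hyB).1
      by_cases hxT : x ∈ T
      · exact hxθ (keyT x hxT y hyU)
      · exact hxθ (hall x ⟨hxA, hxT⟩ y hyU)
    · obtain ⟨x1, hx1⟩ := hA1
      obtain ⟨y, hyB, hyθ⟩ := (hrowmix x1 (hA1A hx1)).2
      exact ⟨x1, hA1sub hx1, y, ⟨hyB, x1, hx1, hyθ⟩, hyθ⟩
  · constructor
    · by_contra hall
      push_neg at hall
      obtain ⟨t, htT⟩ := hTne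
      obtain ⟨y, hyB, hyθ⟩ := (hrowmix t (hA2A (hTA2 htT))).1
      by_cases hyU : y ∈ U1
      · exact hyθ (keyT t htT y hyU)
      · exact hyθ (hall t htT y ⟨hyB, hyU⟩)
    · obtain ⟨t, htT⟩ := hTne
      obtain ⟨htA2, yt, hytB, hytU, hytθ⟩ := htT
      exact ⟨t, ⟨htA2, yt, hytB, hytU, hytθ⟩, yt, ⟨hytB, hytU⟩, hytθ⟩

/-- The full matrix lemma: a crossing-free partition of a fully mixed matrix yields a
valid double split. -/
lemma fcl2 (G : Trigraph V) (A B A1 A2 : Set V)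
    (hdAB : Disjoint A B)
    (hA1 : A1.Nonempty) (hA2 : A2.Nonempty) (hAu : A1 ∪ A2 = A) (hAd : Disjoint A1 A2)
    (hrowmix : ∀ x ∈ A, (∃ y ∈ B, G.θ x y ≠ 1) ∧ (∃ y ∈ B, G.θ x y ≠ -1))
    (hcolmix : ∀ y ∈ B, (∃ x ∈ A, G.θ x y ≠ 1) ∧ (∃ x ∈ A, G.θ x y ≠ -1))
    (hnocross : ¬∃ x1 ∈ A1, ∃ x2 ∈ A2, ∃ y ∈ B, ∃ y' ∈ B, y ≠ y' ∧
      G.θ x1 y ≠ 1 ∧ G.θ x2 y' ≠ 1 ∧ G.θ x1 y' ≠ -1 ∧ G.θ x2 y ≠ -1) :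
    ∃ Ah1 Ah2 Bh1 Bh2 : Set V,
      Ah1.Nonempty ∧ Ah2.Nonempty ∧ Ah1 ∪ Ah2 = A ∧ Disjoint Ah1 Ah2 ∧
      Bh1.Nonempty ∧ Bh2.Nonempty ∧ Bh1 ∪ Bh2 = B ∧ Disjoint Bh1 Bh2 ∧
      (∀ x ∈ Ah1, ∀ y ∈ Bh2, G.θ x y = -1) ∧
      (∀ x ∈ Ah2, ∀ y ∈ Bh1, G.θ x y = 1) ∧
      ((∃ x ∈ Ah1, ∃ y ∈ Bh1, G.θ x y ≠ 1) ∧ (∃ x ∈ Ah1, ∃ y ∈ Bh1, G.θ x y ≠ -1)) ∧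
      ((∃ x ∈ Ah2, ∃ y ∈ Bh2, G.θ x y ≠ 1) ∧ (∃ x ∈ Ah2, ∃ y ∈ Bh2, G.θ x y ≠ -1)) := by
  classical
  have hA1A : A1 ⊆ A := hAu ▸ Set.subset_union_left
  have hA2A : A2 ⊆ A := hAu ▸ Set.subset_union_right
  have hrange : ∀ x y : V, G.θ x y = 1 ∨ G.θ x y = 0 ∨ G.θ x y = -1 := G.range_mem
  have hcomp : ∀ x1 ∈ A1, ∀ x2 ∈ A2,
      (∀ y ∈ B, G.θ x1 y ≠ -1 → G.θ x2 y = 1) ∨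
      (∀ y ∈ B, G.θ x2 y ≠ -1 → G.θ x1 y = 1) := by
    intro x1 hx1 x2 hx2
    by_contra hc
    push_neg at hc
    obtain ⟨⟨y, hyB, hy1, hy2⟩, ⟨y', hy'B, hy'1, hy'2⟩⟩ := hc
    -- θ x1 y ≠ -1, θ x2 y ≠ 1 ; θ x2 y' ≠ -1, θ x1 y' ≠ 1
    have hx12 : x1 ≠ x2 := fun h => (hAd.ne_of_mem hx1 (h ▸ hx2)) rfl
    have hyy' : y ≠ y' := by
      rintro rfl
      have h1 : G.θ x1 y = 0 := by rcases hrange x1 y with h | h | h <;> first | omega | exact h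
      have h2 : G.θ x2 y = 0 := by rcases hrange x2 y with h | h | h <;> first | omega | exact h
      have hne1 : y ≠ x1 := fun h => (hdAB.ne_of_mem (hA1A hx1) hyB) h.symm
      have hne2 : y ≠ x2 := fun h => (hdAB.ne_of_mem (hA2A hx2) hyB) h.symm
      exact G.semi_matching y x1 x2 hne1 hne2 hx12 (by rw [G.symm]; exact h1)
        (by rw [G.symm]; exact h2)
    exact hnocross ⟨x1, hx1, x2, hx2, y', hy'B, y, hyB, hyy'.symm, hy'2, hy2, hy1, hy'1⟩
  by_cases hU1 : ∃ y0 ∈ B, ∀ x ∈ A1, G.θ x y0 = -1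
  · exact fcl2_core G A B A1 A2 hA1 hAu hA1A hA2A hAd hcomp hrowmix hcolmix hU1
  · by_cases hU2 : ∃ y0 ∈ B, ∀ x ∈ A2, G.θ x y0 = -1
    · exact fcl2_core G A B A2 A1 hA2 (Set.union_comm A1 A2 ▸ hAu) hA2A hA1A hAd.symm
        (fun x2 hx2 x1 hx1 => (hcomp x1 hx1 x2 hx2).symm) hrowmix hcolmix hU2
    · -- both U1 = U2 = B : impossible
      exfalso
      push_neg at hU1 hU2
      have hUB1 : ∀ y ∈ B, ∃ x ∈ A1, G.θ x y ≠ -1 := by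
        intro y hy
        obtain ⟨x, hx, hθ⟩ := hU1 y hy
        exact ⟨x, hx, hθ⟩
      have hUB2 : ∀ y ∈ B, ∃ x ∈ A2, G.θ x y ≠ -1 := by
        intro y hy
        obtain ⟨x, hx, hθ⟩ := hU2 y hy
        exact ⟨x, hx, hθ⟩
      obtain ⟨x2, hx2A2, hmax⟩ := Set.Finite.exists_maximalFor
        (fun x => ({z ∈ B | G.θ x z = 1} : Set V).ncard) A2 (Set.toFinite A2) hA2
      obtain ⟨y, hyB, hyθ⟩ := (hrowmix x2 (hA2A hx2A2)).1
      obtain ⟨x1, hx1A1, hx1θ⟩ := hUB1 y hyB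
      have hc21 : ∀ z ∈ B, G.θ x2 z ≠ -1 → G.θ x1 z = 1 := by
        rcases hcomp x1 hx1A1 x2 hx2A2 with h | h
        · exact absurd (h y hyB hx1θ) hyθ
        · exact h
      obtain ⟨y', hy'B, hy'θ⟩ := (hrowmix x1 (hA1A hx1A1)).1
      obtain ⟨x2', hx2'A2, hx2'θ⟩ := hUB2 y' hy'B
      have hc12 : ∀ z ∈ B, G.θ x1 z ≠ -1 → G.θ x2' z = 1 := by
        rcases hcomp x1 hx1A1 x2' hx2'A2 with h | h
        · exact h
        · exact absurd (h y' hy'B hx2'θ) hy'θ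
      have hsub : {z ∈ B | G.θ x2 z = 1} ⊆ {z ∈ B | G.θ x2' z = 1} := by
        rintro z ⟨hzB, hz1⟩
        refine ⟨hzB, hc12 z hzB ?_⟩
        rw [hc21 z hzB (by omega)]
        norm_num
      have hcard : ({z ∈ B | G.θ x2 z = 1} : Set V).ncard ≤
          ({z ∈ B | G.θ x2' z = 1} : Set V).ncard :=
        Set.ncard_le_ncard hsub (Set.toFinite _)
      have hEq : ({z ∈ B | G.θ x2 z = 1} : Set V) = {z ∈ B | G.θ x2' z = 1} :=
        Set.eq_of_subset_of_ncard_le hsub (hmax hx2'A2 hcard)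
          (Set.toFinite _)
      have hyin : y ∈ {z ∈ B | G.θ x2' z = 1} := ⟨hyB, hc12 y hyB hx1θ⟩
      rw [← hEq] at hyin
      exact hyθ hyin.2

end FCL

section Split1

open scoped Classical

variable (G' : Trigraph V') (a b : V') (σ1 σ2 : ℤ)

/-- The adjacency function of the single-split refinement: `some a` plays `a1`,
`none` plays `a2`. -/
noncomputable def s1θ : Option V' → Option V' → ℤ := fun u v =>
  match u, v with
  | some c, some d => if (c = a ∧ d = b) ∨ (c = b ∧ d = a) then σ1 else G'.θ c d
  | some c, none => if c = a then 1 else if c = b then σ2 else G'.θ a c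
  | none, some c => if c = a then 1 else if c = b then σ2 else G'.θ a c
  | none, none => 0

/-- The single-split trigraph. -/
noncomputable def s1 (h1 : σ1 = 1 ∨ σ1 = -1) (h2 : σ2 = 1 ∨ σ2 = 0 ∨ σ2 = -1)
    (hne : a ≠ b) (hθab : G'.θ a b = 0) : Trigraph (Option V') where
  θ := s1θ G' a b σ1 σ2
  range_mem := by
    intro u v
    rcases u with _ | c <;> rcases v with _ | d <;> simp only [s1θ]
    · tauto
    · split_ifs
      · tauto
      · rcases h2 with h | h | h <;> omega
      · exact G'.range_mem _ _
    · split_ifs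
      · tauto
      · rcases h2 with h | h | h <;> omega
      · exact G'.range_mem _ _
    · split_ifs
      · rcases h1 with h | h <;> omega
      · exact G'.range_mem _ _
  symm := by
    intro u v
    rcases u with _ | c <;> rcases v with _ | d <;> simp only [s1θ]
    · split_ifs <;> first | rfl | exact G'.symm _ _ | tauto
  refl_zero := by
    intro u
    rcases u with _ | c <;> simp only [s1θ]
    split_ifs with h
    · rcases h with ⟨rfl, h2⟩ | ⟨rfl, h2⟩ <;> exact absurd h2 (by simp [hne, hne.symm])
    · exact G'.refl_zero c
  semi_matching := by
    have hmA : ∀ c : V', c ≠ a → c ≠ b → G'.θ a c ≠ 0 := fun c hca hcb =>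
      G'.semi_matching a b c hne (Ne.symm hca) (Ne.symm hcb) hθab
    have hmB : ∀ c : V', c ≠ a → c ≠ b → G'.θ b c ≠ 0 := fun c hca hcb =>
      G'.semi_matching b a c hne.symm (Ne.symm hcb) (Ne.symm hca)
        (by rw [G'.symm]; exact hθab)
    have hσ1ne : σ1 ≠ 0 := by rcases h1 with h | h <;> omega
    intro u v w huv huw hvw h0
    rcases u with _ | c
    · rcases v with _ | d
      · exact absurd rfl huv
      · rcases w with _ | e
        · exact absurd rfl huw
        · simp only [s1θ] at h0 ⊢
          split_ifs at h0 with hd1 hd2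
          · omega
          · split_ifs with he1 he2
            · omega
            · exact absurd (by rw [hd2, he2]) hvw
            · exact hmA e he1 he2
          · exact absurd h0 (hmA d hd1 hd2)
    · rcases v with _ | d
      · rcases w with _ | e
        · exact absurd rfl hvw
        · simp only [s1θ] at h0 ⊢
          split_ifs at h0 with hc1 hc2
          · omega
          · split_ifs with hp
            · exact hσ1ne
            · have hea : e ≠ a := fun h => hp (Or.inr ⟨hc2, h⟩)
              have heb : e ≠ b := fun h => huw (by rw [h, ← hc2])
              rw [hc2]
              exact hmB e hea heb
          · exact absurd h0 (hmA c hc1 hc2)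
      · simp only [s1θ] at h0
        split_ifs at h0 with hp
        · exact absurd h0 hσ1ne
        · have hcd : c ≠ d := fun h => huv (by rw [h])
          have hca : c ≠ a := by
            rintro rfl
            have hdb : d = b := by
              by_contra hdb
              exact hmA d (Ne.symm hcd) hdb h0
            exact hp (Or.inl ⟨rfl, hdb⟩)
          have hcb : c ≠ b := by
            rintro rfl
            have hda : d = a := by
              by_contra hda
              exact hmB d hda (Ne.symm hcd) h0
            exact hp (Or.inr ⟨rfl, hda⟩)
          rcases w with _ | e
          · simp only [s1θ]
            rw [if_neg hca, if_neg hcb]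
            exact hmA c hca hcb
          · simp only [s1θ]
            split_ifs with hp2
            · exact hσ1ne
            · have hce : c ≠ e := fun h => huw (by rw [h])
              have hde : d ≠ e := fun h => hvw (by rw [h])
              exact G'.semi_matching c d e hcd hce hde h0

/-- The thickening map of the single split. -/
noncomputable def s1J (I : V' → Set V) (a : V') (A1 A2 : Set V) : Option V' → Set V :=
  fun u => match u with
  | some c => if c = a then A1 else I c
  | none => A2

end Split1


section Split1Main

variable {V V' : Type} [Fintype V] [Fintype V']

/-- Key lemma: an optimal antithickening admits no single split of a semiedge piece with a
pure part. -/
lemma split1 {G : Trigraph V} {G' : Trigraph V'} {I : V' → Set V} {a b : V'}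
    (hopt : G.OptimalAntithickening G' I) (hab : G'.SemiAdj a b) {A1 A2 : Set V}
    (hA1ne : A1.Nonempty) (hA2ne : A2.Nonempty) (hAu : A1 ∪ A2 = I a)
    (hAd : Disjoint A1 A2)
    (hpure : G.StronglyComplete A1 (I b) ∨ G.StronglyAnticomplete A1 (I b)) : False := by
  classical
  obtain ⟨hthk, hlam, hmax⟩ := hopt
  obtain ⟨hIprop, hIdisj, hIcov, hIadj⟩ := hthk
  have hneab : a ≠ b := hab.1
  have hθab : G'.θ a b = 0 := hab.2
  have hmA : ∀ c : V', c ≠ a → c ≠ b → G'.θ a c ≠ 0 := fun c hca hcb =>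
    G'.semi_matching a b c hneab (Ne.symm hca) (Ne.symm hcb) hθab
  have hmB : ∀ c : V', c ≠ a → c ≠ b → G'.θ b c ≠ 0 := fun c hca hcb =>
    G'.semi_matching b a c hneab.symm (Ne.symm hcb) (Ne.symm hca)
      (by rw [G'.symm]; exact hθab)
  have hmixed := (hIadj a b hneab).2.2 hab
  have hA1sub : A1 ⊆ I a := hAu ▸ Set.subset_union_left
  have hA2sub : A2 ⊆ I a := hAu ▸ Set.subset_union_right
  set σ1 : ℤ := if G.StronglyComplete A1 (I b) then 1 else -1 with hσ1def
  set σ2 : ℤ := if G.StronglyComplete A2 (I b) then 1 else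
    if G.StronglyAnticomplete A2 (I b) then -1 else 0 with hσ2def
  have h1 : σ1 = 1 ∨ σ1 = -1 := by rw [hσ1def]; split_ifs <;> simp
  have h2 : σ2 = 1 ∨ σ2 = 0 ∨ σ2 = -1 := by rw [hσ2def]; split_ifs <;> simp
  have hσ1ne : σ1 ≠ 0 := by rcases h1 with h | h <;> omega
  have hσ1SC : σ1 = 1 → G.StronglyComplete A1 (I b) := by
    intro h
    by_contra hc
    rw [hσ1def, if_neg hc] at h
    omega
  have hσ1SA : σ1 = -1 → G.StronglyAnticomplete A1 (I b) := by
    intro h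
    rcases hpure with hp | hp
    · rw [hσ1def, if_pos hp] at h; omega
    · exact hp
  have hσ2SC : σ2 = 1 → G.StronglyComplete A2 (I b) := by
    intro h
    by_contra hc
    rw [hσ2def, if_neg hc] at h
    split_ifs at h <;> omega
  have hσ2SA : σ2 = -1 → G.StronglyAnticomplete A2 (I b) := by
    intro h
    by_cases hc : G.StronglyComplete A2 (I b)
    · rw [hσ2def, if_pos hc] at h; omega
    · by_contra hc2
      rw [hσ2def, if_neg hc, if_neg hc2] at h
      omega
  have hσ2mix : σ2 = 0 → ¬G.StronglyComplete A2 (I b) ∧ ¬G.StronglyAnticomplete A2 (I b) := by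
    intro h
    constructor
    · intro hc; rw [hσ2def, if_pos hc] at h; omega
    · intro hc
      by_cases hc1 : G.StronglyComplete A2 (I b)
      · rw [hσ2def, if_pos hc1] at h; omega
      · rw [hσ2def, if_neg hc1, if_pos hc] at h; omega
  have hσ11 : ¬(σ1 = 1 ∧ σ2 = 1) := by
    rintro ⟨ha1, ha2⟩
    refine hmixed.1 fun x hx y hy => ?_
    rw [← hAu] at hx
    rcases hx with h | h
    · exact hσ1SC ha1 x h y hy
    · exact hσ2SC ha2 x h y hy
  have hσmm : ¬(σ1 = -1 ∧ σ2 = -1) := by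
    rintro ⟨ha1, ha2⟩
    refine hmixed.2 fun x hx y hy => ?_
    rw [← hAu] at hx
    rcases hx with h | h
    · exact hσ1SA ha1 x h y hy
    · exact hσ2SA ha2 x h y hy
  set H : Trigraph (Option V') := s1 G' a b σ1 σ2 h1 h2 hneab hθab with hHdef
  have vss : ∀ c d : V', H.θ (some c) (some d) =
      if (c = a ∧ d = b) ∨ (c = b ∧ d = a) then σ1 else G'.θ c d := fun _ _ => rfl
  have vsn : ∀ c : V', H.θ (some c) none =
      if c = a then 1 else if c = b then σ2 else G'.θ a c := fun _ => rfl
  have vns : ∀ c : V', H.θ none (some c) =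
      if c = a then 1 else if c = b then σ2 else G'.θ a c := fun _ => rfl
  have vab : H.θ (some a) (some b) = σ1 := by rw [vss]; exact if_pos (Or.inl ⟨rfl, rfl⟩)
  have vba : H.θ (some b) (some a) = σ1 := by rw [vss]; exact if_pos (Or.inr ⟨rfl, rfl⟩)
  have van : H.θ (some a) none = 1 := by rw [vsn]; exact if_pos rfl
  have vna : H.θ none (some a) = 1 := by rw [vns]; exact if_pos rfl
  have vbn : H.θ (some b) none = σ2 := by
    rw [vsn, if_neg (Ne.symm hneab), if_pos rfl]
  have vnb : H.θ none (some b) = σ2 := by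
    rw [vns, if_neg (Ne.symm hneab), if_pos rfl]
  have vold : ∀ c d : V', ¬(c = a ∧ d = b) → ¬(c = b ∧ d = a) →
      H.θ (some c) (some d) = G'.θ c d := by
    intro c d hp hq
    have hnp : ¬((c = a ∧ d = b) ∨ (c = b ∧ d = a)) := by rintro (h | h); exacts [hp h, hq h]
    rw [vss, if_neg hnp]
  have vac : ∀ c : V', c ≠ b → H.θ (some a) (some c) = G'.θ a c :=
    fun c h => vold a c (fun hh => h hh.2) (fun hh => hneab hh.1)
  have vcn : ∀ c : V', c ≠ a → c ≠ b → H.θ (some c) none = G'.θ a c := by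
    intro c hca hcb
    rw [vsn, if_neg hca, if_neg hcb]
  have vnc : ∀ c : V', c ≠ a → c ≠ b → H.θ none (some c) = G'.θ a c := by
    intro c hca hcb
    rw [vns, if_neg hca, if_neg hcb]
  -- the collapse map
  set μ : Option V' → V' := fun u => u.getD a with hμdef
  have hsur : ∀ w : V', ∃ u, μ u = w := fun w => ⟨some w, rfl⟩
  have hθtr : ∀ u v : Option V', μ u ≠ μ v → ¬(μ u = a ∧ μ v = b) →
      ¬(μ u = b ∧ μ v = a) → H.θ u v = G'.θ (μ u) (μ v) := by
    intro u v hne hp hq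
    rcases u with _ | c <;> rcases v with _ | d
    · exact absurd rfl hne
    · have hdb : d ≠ b := fun h => hp ⟨rfl, h⟩
      have hda : d ≠ a := fun h => hne (by simp [hμdef, h])
      show H.θ none (some d) = G'.θ a d
      rw [vnc d hda hdb]
    · have hcb : c ≠ b := fun h => hq ⟨h, rfl⟩
      have hca : c ≠ a := fun h => hne (by simp [hμdef, h])
      show H.θ (some c) none = G'.θ c a
      rw [vcn c hca hcb, G'.symm]
    · show H.θ (some c) (some d) = G'.θ c d
      exact vold c d (fun h => hp h) (fun h => hq h)
  have hfib : ∀ u v : Option V', u ≠ v → μ u = μ v → μ u = a ∨ μ u = b := by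
    intro u v huv hμ
    left
    rcases u with _ | c
    · rfl
    · rcases v with _ | d
      · exact hμ
      · exact absurd (by rw [show c = d from hμ]) huv
  have hfibpair : ∀ u v : Option V', u ≠ v → μ u = μ v →
      (u = some a ∧ v = none) ∨ (u = none ∧ v = some a) := by
    intro u v huv hμ
    rcases u with _ | c
    · rcases v with _ | d
      · exact absurd rfl huv
      · exact Or.inr ⟨rfl, by rw [show d = a from hμ.symm]⟩
    · rcases v with _ | d
      · exact Or.inl ⟨by rw [show c = a from hμ], rfl⟩
      · exact absurd (by rw [show c = d from hμ]) huv
  have hF1 : ∀ v1 v2 v3 v4 : Option V', H.IsSquare v1 v2 v3 v4 →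
      ¬(some a ∈ ({v1, v2, v3, v4} : Set (Option V')) ∧
        (none : Option V') ∈ ({v1, v2, v3, v4} : Set (Option V'))) := by
    rintro v1 v2 v3 v4 hsq ⟨hxa, hxn⟩
    have hnesn : (some a : Option V') ≠ none := by simp
    rcases square_pair hsq hxa hxn hnesn with h | h |
      ⟨z, w, hz, hw, hzx, hzy, hwx, hwy, hzw, hAA1, hAA2, hAA3, hAA4⟩
    · have := h.2; rw [van] at this; rcases this with h2 | h2 <;> omega
    · have := h.2; rw [vna] at this; rcases this with h2 | h2 <;> omega
    · rcases z with _ | e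
      · exact hzy rfl
      rcases w with _ | f
      · exact hwy rfl
      have hea : e ≠ a := fun h => hzx (by rw [h])
      have hfa : f ≠ a := fun h => hwx (by rw [h])
      by_cases heb : e = b
      · subst heb
        have hfb : f ≠ e := fun h => hzw (by rw [h])
        have h3 := hAA3.2; rw [vac f hfb] at h3
        have h4 := hAA4.2; rw [vnc f hfa hfb] at h4
        have : G'.θ a f = 0 := by rcases h3 with h | h <;> rcases h4 with h' | h' <;> omega
        exact hmA f hfa hfb this
      · have hh1 := hAA1.2; rw [vac e heb] at hh1
        have hh2 := hAA2.2; rw [vnc e hea heb] at hh2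
        have : G'.θ a e = 0 := by rcases hh1 with h | h <;> rcases hh2 with h' | h' <;> omega
        exact hmA e hea heb this
  have hnofib : ∀ P Q : Set (Option V'), ∀ v1 v2 v3 v4 : Option V',
      H.IsSquare v1 v2 v3 v4 → ({v1, v2, v3, v4} : Set (Option V')) ⊆ P ∪ Q →
      ∀ u ∈ ({v1, v2, v3, v4} : Set (Option V')),
      ∀ w ∈ ({v1, v2, v3, v4} : Set (Option V')), u ≠ w → μ u ≠ μ w := by
    intro P Q v1 v2 v3 v4 hsq hsub u hu w hw huw hμ
    rcases hfibpair u w huw hμ with ⟨rfl, rfl⟩ | ⟨rfl, rfl⟩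
    · exact hF1 v1 v2 v3 v4 hsq ⟨hu, hw⟩
    · exact hF1 v1 v2 v3 v4 hsq ⟨hw, hu⟩
  -- membership helpers for μ-images
  have himgb : ∀ (S : Set (Option V')), b ∈ μ '' S → some b ∈ S := by
    rintro S ⟨u, hu, hub⟩
    rcases u with _ | c
    · exact absurd (show a = b from hub) hneab
    · rwa [show c = b from hub] at hu
  have himga : ∀ (S : Set (Option V')), a ∈ μ '' S → some a ∈ S ∨ (none : Option V') ∈ S := by
    rintro S ⟨u, hu, hua⟩
    rcases u with _ | c
    · exact Or.inr hu
    · exact Or.inl (by rwa [show c = a from hua] at hu)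
  -- handler: both special vertices in the same part
  have hsame : ∀ P Q : Set (Option V'), H.SquareConnected P Q → some a ∈ P →
      (none : Option V') ∈ P → False := by
    intro P Q hsqc haP hnP
    have hPcl := hsqc.1.2.2.2.1
    have hdisj := hsqc.1.2.2.1
    have hbP : some b ∉ P := by
      intro hbP
      have e1 : H.θ (some a) (some b) = 1 := hPcl haP hbP (by simp [hneab])
      have e2 : H.θ none (some b) = 1 := hPcl hnP hbP (by simp)
      rw [vab] at e1
      rw [vnb] at e2
      exact hσ11 ⟨e1, e2⟩
    have hbQ : some b ∈ Q := by
      by_contra hbQ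
      have hout : (some b : Option V') ∉ P ∪ Q := by rintro (h | h); exacts [hbP h, hbQ h]
      rcases (hsqc.1.2.2.2.2.2.2 (some b) hout).1 with h | h
      · have e1 : H.θ (some b) (some a) = 1 := h (some b) rfl (some a) haP
        have e2 : H.θ (some b) none = 1 := h (some b) rfl none hnP
        rw [vba] at e1
        rw [vbn] at e2
        exact hσ11 ⟨e1, e2⟩
      · have e1 : H.θ (some b) (some a) = -1 := h (some b) rfl (some a) haP
        have e2 : H.θ (some b) none = -1 := h (some b) rfl none hnP
        rw [vba] at e1
        rw [vbn] at e2
        exact hσmm ⟨e1, e2⟩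
    refine hlam ⟨μ '' P, μ '' Q, transfer G' hab H μ hsur hθtr hfib hsqc
      (hnofib P Q) ?_ ?_ ?_ ?_ ?_ ?_⟩
    · rintro ⟨-, hb⟩; exact hbP (himgb P hb)
    · rintro ⟨ha', -⟩
      rcases himga Q ha' with h | h
      · exact (hdisj.ne_of_mem haP h) rfl
      · exact (hdisj.ne_of_mem hnP h) rfl
    · rintro ⟨-, ha'⟩
      rcases himga Q ha' with h | h
      · exact (hdisj.ne_of_mem haP h) rfl
      · exact (hdisj.ne_of_mem hnP h) rfl
    · rintro ⟨hb, -⟩; exact hbP (himgb P hb)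
    · intro h; exact absurd (Or.inl ⟨some a, haP, rfl⟩) h
    · intro h; exact absurd (Or.inr ⟨some b, hbQ, rfl⟩) h
  -- handler: special vertices in different parts
  have hdiff : ∀ P Q : Set (Option V'), H.SquareConnected P Q → ∀ x y : Option V',
      (x = some a ∧ y = none ∨ x = none ∧ y = some a) → x ∈ P → y ∈ Q → False := by
    intro P Q hsqc x y hxy hxP hyQ
    have hPcl := hsqc.1.2.2.2.1
    have hQcl := hsqc.1.2.2.2.2.1
    have hdisj := hsqc.1.2.2.1
    have hxold : ∀ c : V', c ≠ a → c ≠ b → H.θ x (some c) = G'.θ a c := by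
      intro c hca hcb
      rcases hxy with ⟨rfl, -⟩ | ⟨rfl, -⟩
      · exact vac c hcb
      · exact vnc c hca hcb
    have hyold : ∀ c : V', c ≠ a → c ≠ b → H.θ y (some c) = G'.θ a c := by
      intro c hca hcb
      rcases hxy with ⟨-, rfl⟩ | ⟨-, rfl⟩
      · exact vnc c hca hcb
      · exact vac c hcb
    obtain ⟨ph, ps, hphP, hpsP, hne2, hanti, hadj⟩ := sqConn_partner (sqConn_symm hsqc) hyQ
    have hbP : some b ∈ P := by
      rcases ph with _ | e
      · rcases hxy with ⟨rfl, rfl⟩ | ⟨rfl, rfl⟩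
        · exact absurd rfl (hdisj.ne_of_mem hphP hyQ)
        · have h0 := hanti.2
          rw [van] at h0
          rcases h0 with h | h <;> omega
      · by_cases heb : e = b
        · rwa [heb] at hphP
        · by_cases hea : e = a
          · subst hea
            rcases hxy with ⟨rfl, rfl⟩ | ⟨rfl, rfl⟩
            · have h0 := hanti.2
              rw [vna] at h0
              rcases h0 with h | h <;> omega
            · exact absurd rfl (hdisj.ne_of_mem hphP hyQ)
          · have h1 := hanti.2
            rw [hyold e hea heb] at h1
            have hxph : x ≠ some e := by
              rcases hxy with ⟨rfl, -⟩ | ⟨rfl, -⟩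
              · exact fun h => hea (Option.some_injective _ h).symm
              · simp
            have h2 : H.θ x (some e) = 1 := hPcl hxP hphP hxph
            rw [hxold e hea heb] at h2
            rcases h1 with h | h <;> omega
    obtain ⟨qh, qs, hqhQ, hqsQ, hne3, hanti2, hadj2⟩ := sqConn_partner hsqc hxP
    rcases qh with _ | e
    · rcases hxy with ⟨rfl, rfl⟩ | ⟨rfl, rfl⟩
      · have h0 := hanti2.2
        rw [van] at h0
        rcases h0 with h | h <;> omega
      · exact absurd rfl (hdisj.ne_of_mem hxP hqhQ)
    · by_cases heb : e = b
      · subst heb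
        exact (hdisj.ne_of_mem hbP hqhQ) rfl
      · by_cases hea : e = a
        · subst hea
          rcases hxy with ⟨rfl, rfl⟩ | ⟨rfl, rfl⟩
          · exact absurd rfl (hdisj.ne_of_mem hxP hqhQ)
          · have h0 := hanti2.2
            rw [vna] at h0
            rcases h0 with h | h <;> omega
        · have h1 := hanti2.2
          rw [hxold e hea heb] at h1
          have hyqh : y ≠ some e := by
            rcases hxy with ⟨-, rfl⟩ | ⟨-, rfl⟩
            · simp
            · exact fun h => hea (Option.some_injective _ h).symm
          have h2 : H.θ y (some e) = 1 := hQcl hyQ hqhQ hyqh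
          rw [hyold e hea heb] at h2
          rcases h1 with h | h <;> omega
  -- handler: one special vertex in a part, the other outside
  have hinout : ∀ P Q : Set (Option V'), H.SquareConnected P Q → ∀ x y : Option V',
      (x = some a ∧ y = none ∨ x = none ∧ y = some a) → x ∈ P → y ∉ P ∪ Q → False := by
    intro P Q hsqc x y hxy hxP hyout
    have hPcl := hsqc.1.2.2.2.1
    have hdisj := hsqc.1.2.2.1
    have hom := hsqc.1.2.2.2.2.2.2
    have hθyx : H.θ y x = 1 := by
      rcases hxy with ⟨rfl, rfl⟩ | ⟨rfl, rfl⟩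
      · exact vna
      · exact van
    have hxold : ∀ c : V', c ≠ a → c ≠ b → H.θ x (some c) = G'.θ a c := by
      intro c hca hcb
      rcases hxy with ⟨rfl, -⟩ | ⟨rfl, -⟩
      · exact vac c hcb
      · exact vnc c hca hcb
    have hyold : ∀ c : V', c ≠ a → c ≠ b → H.θ y (some c) = G'.θ a c := by
      intro c hca hcb
      rcases hxy with ⟨-, rfl⟩ | ⟨-, rfl⟩
      · exact vnc c hca hcb
      · exact vac c hcb
    obtain ⟨sx, sy, hsx, hsy, hsxy⟩ : ∃ sx sy : ℤ, H.θ x (some b) = sx ∧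
        H.θ y (some b) = sy ∧ ¬(sx = 1 ∧ sy = 1) := by
      rcases hxy with ⟨rfl, rfl⟩ | ⟨rfl, rfl⟩
      · exact ⟨σ1, σ2, vab, vnb, hσ11⟩
      · exact ⟨σ2, σ1, vnb, vab, fun h => hσ11 ⟨h.2, h.1⟩⟩
    have hbP : some b ∉ P := by
      intro hbP
      have hxb : x ≠ some b := by
        rcases hxy with ⟨rfl, -⟩ | ⟨rfl, -⟩
        · exact fun h => hneab (Option.some_injective _ h)
        · simp
      have e1 : H.θ x (some b) = 1 := hPcl hxP hbP hxb
      rcases (hom y hyout).1 with h | h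
      · have e2 : H.θ y (some b) = 1 := h y rfl (some b) hbP
        rw [hsx] at e1
        rw [hsy] at e2
        exact hsxy ⟨e1, e2⟩
      · have e2 : H.θ y x = -1 := h y rfl x hxP
        rw [hθyx] at e2
        omega
    have hbQ : some b ∈ Q := by
      by_contra hbQ
      obtain ⟨qh, qs, hqhQ, hqsQ, hne3, hanti, hadj⟩ := sqConn_partner hsqc hxP
      have hold : ∀ u ∈ Q, ∃ c : V', u = some c ∧ c ≠ a ∧ c ≠ b := by
        intro u hu
        rcases u with _ | c
        · exfalso
          rcases hxy with ⟨rfl, rfl⟩ | ⟨rfl, rfl⟩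
          · exact hyout (Or.inr hu)
          · exact (hdisj.ne_of_mem hxP hu) rfl
        · refine ⟨c, rfl, ?_, ?_⟩
          · rintro rfl
            rcases hxy with ⟨rfl, -⟩ | ⟨-, rfl⟩
            · exact (hdisj.ne_of_mem hxP hu) rfl
            · exact hyout (Or.inr hu)
          · rintro rfl
            exact hbQ hu
      obtain ⟨c, rfl, hca, hcb⟩ := hold qh hqhQ
      obtain ⟨d, rfl, hda, hdb⟩ := hold qs hqsQ
      have h1 := hanti.2
      rw [hxold c hca hcb] at h1
      have h2 := hadj.2
      rw [hxold d hda hdb] at h2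
      rcases (hom y hyout).2 with h | h
      · have e1 : H.θ y (some c) = 1 := h y rfl _ hqhQ
        rw [hyold c hca hcb] at e1
        rcases h1 with hh | hh <;> omega
      · have e1 : H.θ y (some d) = -1 := h y rfl _ hqsQ
        rw [hyold d hda hdb] at e1
        rcases h2 with hh | hh <;> omega
    have hμx : μ x = a := by
      rcases hxy with ⟨rfl, -⟩ | ⟨rfl, -⟩ <;> rfl
    refine hlam ⟨μ '' P, μ '' Q, transfer G' hab H μ hsur hθtr hfib hsqc
      (hnofib P Q) ?_ ?_ ?_ ?_ ?_ ?_⟩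
    · rintro ⟨-, hb⟩; exact hbP (himgb P hb)
    · rintro ⟨ha', -⟩
      rcases himga Q ha' with h | h
      · rcases hxy with ⟨rfl, -⟩ | ⟨-, rfl⟩
        · exact (hdisj.ne_of_mem hxP h) rfl
        · exact hyout (Or.inr h)
      · rcases hxy with ⟨-, rfl⟩ | ⟨rfl, -⟩
        · exact hyout (Or.inr h)
        · exact (hdisj.ne_of_mem hxP h) rfl
    · rintro ⟨-, ha'⟩
      rcases himga Q ha' with h | h
      · rcases hxy with ⟨rfl, -⟩ | ⟨-, rfl⟩
        · exact (hdisj.ne_of_mem hxP h) rfl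
        · exact hyout (Or.inr h)
      · rcases hxy with ⟨-, rfl⟩ | ⟨rfl, -⟩
        · exact hyout (Or.inr h)
        · exact (hdisj.ne_of_mem hxP h) rfl
    · rintro ⟨hb, -⟩; exact hbP (himgb P hb)
    · intro h; exact absurd (Or.inl ⟨x, hxP, hμx⟩) h
    · intro h; exact absurd (Or.inr ⟨some b, hbQ, rfl⟩) h
  -- handler: both special vertices outside
  have hbothout : ∀ P Q : Set (Option V'), H.SquareConnected P Q →
      some a ∉ P ∪ Q → (none : Option V') ∉ P ∪ Q → False := by
    intro P Q hsqc haout hnout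
    have hom := hsqc.1.2.2.2.2.2.2
    have hbR : ∀ R : Set (Option V'), R ⊆ P ∪ Q → (∃ p ∈ R, ∃ p' ∈ R, p ≠ p') →
        (H.StronglyComplete {some a} R ∨ H.StronglyAnticomplete {some a} R) →
        (H.StronglyComplete {none} R ∨ H.StronglyAnticomplete {none} R) →
        some b ∉ R := by
      intro R hRsub ⟨p, hp, p', hp', hpp⟩ hpa hpn hbR
      have hex : ∃ p0 ∈ R, p0 ≠ some b := by
        by_cases h : p = some b
        · refine ⟨p', hp', fun hh => hpp ?_⟩
          rw [h, hh]
        · exact ⟨p, hp, h⟩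
      obtain ⟨p0, hp0R, hp0b⟩ := hex
      obtain ⟨c, rfl, hca, hcb⟩ : ∃ c : V', p0 = some c ∧ c ≠ a ∧ c ≠ b := by
        rcases p0 with _ | c
        · exact absurd (hRsub hp0R) hnout
        · refine ⟨c, rfl, ?_, fun h => hp0b (by rw [h])⟩
          rintro rfl
          exact haout (hRsub hp0R)
      rcases hpa with h | h
      · have e1 : H.θ (some a) (some b) = 1 := h _ rfl _ hbR
        have e2 : H.θ (some a) (some c) = 1 := h _ rfl _ hp0R
        rw [vab] at e1
        rw [vac c hcb] at e2
        rcases hpn with h' | h'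
        · have f1 : H.θ none (some b) = 1 := h' _ rfl _ hbR
          rw [vnb] at f1
          exact hσ11 ⟨e1, f1⟩
        · have f2 : H.θ none (some c) = -1 := h' _ rfl _ hp0R
          rw [vnc c hca hcb] at f2
          omega
      · have e1 : H.θ (some a) (some b) = -1 := h _ rfl _ hbR
        have e2 : H.θ (some a) (some c) = -1 := h _ rfl _ hp0R
        rw [vab] at e1
        rw [vac c hcb] at e2
        rcases hpn with h' | h'
        · have f2 : H.θ none (some c) = 1 := h' _ rfl _ hp0R
          rw [vnc c hca hcb] at f2
          omega
        · have f1 : H.θ none (some b) = -1 := h' _ rfl _ hbR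
          rw [vnb] at f1
          exact hσmm ⟨e1, f1⟩
    obtain ⟨hP2, hQ2⟩ := sqConn_two hsqc
    have hbP : some b ∉ P :=
      hbR P Set.subset_union_left hP2 (hom (some a) haout).1 (hom none hnout).1
    have hbQ : some b ∉ Q :=
      hbR Q Set.subset_union_right hQ2 (hom (some a) haout).2 (hom none hnout).2
    refine hlam ⟨μ '' P, μ '' Q, transfer G' hab H μ hsur hθtr hfib hsqc
      (hnofib P Q) ?_ ?_ ?_ ?_ ?_ ?_⟩
    · rintro ⟨ha', -⟩
      rcases himga P ha' with h | h
      · exact haout (Or.inl h)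
      · exact hnout (Or.inl h)
    · rintro ⟨ha', -⟩
      rcases himga Q ha' with h | h
      · exact haout (Or.inr h)
      · exact hnout (Or.inr h)
    · rintro ⟨ha', -⟩
      rcases himga P ha' with h | h
      · exact haout (Or.inl h)
      · exact hnout (Or.inl h)
    · rintro ⟨hb, -⟩
      exact hbP (himgb P hb)
    · intro hanotin
      rintro (h | h)
      · exact hbP (himgb P h)
      · exact hbQ (himgb Q h)
    · intro hbnotin2
      rintro (h | h)
      · rcases himga P h with h' | h'
        · exact haout (Or.inl h')
        · exact hnout (Or.inl h')
      · rcases himga Q h with h' | h'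
        · exact haout (Or.inr h')
        · exact hnout (Or.inr h')
  -- laminarity of the refined trigraph
  have hHlam : H.Laminar := by
    rintro ⟨P, Q, hsqc⟩
    by_cases haP : some a ∈ P
    · by_cases hnP : (none : Option V') ∈ P
      · exact hsame P Q hsqc haP hnP
      · by_cases hnQ : (none : Option V') ∈ Q
        · exact hdiff P Q hsqc _ _ (Or.inl ⟨rfl, rfl⟩) haP hnQ
        · exact hinout P Q hsqc _ _ (Or.inl ⟨rfl, rfl⟩) haP
            (by rintro (h | h); exacts [hnP h, hnQ h])
    · by_cases haQ : some a ∈ Q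
      · by_cases hnQ : (none : Option V') ∈ Q
        · exact hsame Q P (sqConn_symm hsqc) haQ hnQ
        · by_cases hnP : (none : Option V') ∈ P
          · exact hdiff P Q hsqc _ _ (Or.inr ⟨rfl, rfl⟩) hnP haQ
          · exact hinout Q P (sqConn_symm hsqc) _ _ (Or.inl ⟨rfl, rfl⟩) haQ
              (by rintro (h | h); exacts [hnQ h, hnP h])
      · by_cases hnP : (none : Option V') ∈ P
        · exact hinout P Q hsqc _ _ (Or.inr ⟨rfl, rfl⟩) hnP
            (by rintro (h | h); exacts [haP h, haQ h])
        · by_cases hnQ : (none : Option V') ∈ Q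
          · exact hinout Q P (sqConn_symm hsqc) _ _ (Or.inr ⟨rfl, rfl⟩) hnQ
              (by rintro (h | h); exacts [haQ h, haP h])
          · exact hbothout P Q hsqc (by rintro (h | h); exacts [haP h, haQ h])
              (by rintro (h | h); exacts [hnP h, hnQ h])
  -- the thickening map
  set J : Option V' → Set V := s1J I a A1 A2 with hJdef
  have hJa : J (some a) = A1 := by simp [hJdef, s1J]
  have hJn : J none = A2 := rfl
  have hJc : ∀ c : V', c ≠ a → J (some c) = I c := by
    intro c h
    simp [hJdef, s1J, h]
  have hJsub : ∀ c : V', J (some c) ⊆ I c := by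
    intro c
    by_cases h : c = a
    · subst h
      rw [hJa]
      exact hA1sub
    · rw [hJc c h]
  have hthkH : G.IsThickening H J := by
    refine ⟨?_, ?_, ?_, ?_⟩
    · intro u
      rcases u with _ | c
      · exact ⟨hA2ne, ((hIprop a).2).mono hA2sub⟩
      · by_cases h : c = a
        · rw [h, hJa]
          exact ⟨hA1ne, ((hIprop a).2).mono hA1sub⟩
        · rw [hJc c h]
          exact hIprop c
    · intro u v huv
      rcases u with _ | c <;> rcases v with _ | d
      · exact absurd rfl huv
      · rw [hJn]
        by_cases h : d = a
        · rw [h, hJa]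
          exact hAd.symm
        · rw [hJc d h]
          exact (hIdisj a d (Ne.symm h)).mono_left hA2sub
      · rw [hJn]
        by_cases h : c = a
        · rw [h, hJa]
          exact hAd
        · rw [hJc c h]
          exact (hIdisj c a h).mono_right hA2sub
      · have hcd : c ≠ d := fun h => huv (by rw [h])
        by_cases hc : c = a
        · have hd' : d ≠ a := fun hh => hcd (by rw [hc, hh])
          rw [hc, hJa, hJc d hd']
          exact (hIdisj a d (Ne.symm hd')).mono_left hA1sub
        · by_cases hd : d = a
          · rw [hJc c hc, hd, hJa]
            exact (hIdisj c a hc).mono_right hA1sub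
          · rw [hJc c hc, hJc d hd]
            exact hIdisj c d hcd
    · apply Set.eq_univ_of_forall
      intro x
      have hx : x ∈ ⋃ v, I v := by rw [hIcov]; trivial
      rw [Set.mem_iUnion] at hx
      obtain ⟨c, hc⟩ := hx
      rw [Set.mem_iUnion]
      by_cases h : c = a
      · rw [h] at hc
        rw [← hAu] at hc
        rcases hc with h | h
        · exact ⟨some a, by rw [hJa]; exact h⟩
        · exact ⟨none, h⟩
      · exact ⟨some c, by rw [hJc c h]; exact hc⟩
    · intro u v huv
      rcases u with _ | c <;> rcases v with _ | d
      · exact absurd rfl huv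
      · rw [hJn]
        by_cases hda : d = a
        · rw [hda, hJa]
          refine ⟨?_, ?_, ?_⟩
          · intro _
            exact fun x hx y hy => (hIprop a).2 (hA2sub hx) (hA1sub hy)
              (Ne.symm (hAd.ne_of_mem hy hx))
          · intro h
            exfalso
            have h0 : H.θ none (some a) = -1 := h
            rw [vna] at h0
            omega
          · intro h
            exfalso
            have h0 : (1 : ℤ) = 0 := by rw [← vna]; exact h.2
            omega
        · by_cases hdb : d = b
          · rw [hdb, hJc b (Ne.symm hneab)]
            refine ⟨?_, ?_, ?_⟩
            · intro h
              have h0 : σ2 = 1 := by rw [← vnb]; exact h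
              exact hσ2SC h0
            · intro h
              have h0 : σ2 = -1 := by rw [← vnb]; exact h
              exact hσ2SA h0
            · intro h
              have h0 : σ2 = 0 := by rw [← vnb]; exact h.2
              exact hσ2mix h0
          · rw [hJc d hda]
            refine ⟨?_, ?_, ?_⟩
            · intro h
              have h0 : G'.θ a d = 1 := by rw [← vnc d hda hdb]; exact h
              exact sc_mono ((hIadj a d (Ne.symm hda)).1 h0) hA2sub subset_rfl
            · intro h
              have h0 : G'.θ a d = -1 := by rw [← vnc d hda hdb]; exact h
              exact sa_mono ((hIadj a d (Ne.symm hda)).2.1 h0) hA2sub subset_rfl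
            · intro h
              exfalso
              have h0 : G'.θ a d = 0 := by rw [← vnc d hda hdb]; exact h.2
              exact hmA d hda hdb h0
      · rw [hJn]
        by_cases hca : c = a
        · rw [hca, hJa]
          refine ⟨?_, ?_, ?_⟩
          · intro _
            exact fun x hx y hy => (hIprop a).2 (hA1sub hx) (hA2sub hy) (hAd.ne_of_mem hx hy)
          · intro h
            exfalso
            have h0 : H.θ (some a) none = -1 := h
            rw [van] at h0
            omega
          · intro h
            exfalso
            have h0 : (1 : ℤ) = 0 := by rw [← van]; exact h.2
            omega
        · by_cases hcb : c = b
          · rw [hcb, hJc b (Ne.symm hneab)]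
            refine ⟨?_, ?_, ?_⟩
            · intro h
              have h0 : σ2 = 1 := by rw [← vbn]; exact h
              exact sc_symm (hσ2SC h0)
            · intro h
              have h0 : σ2 = -1 := by rw [← vbn]; exact h
              exact sa_symm (hσ2SA h0)
            · intro h
              have h0 : σ2 = 0 := by rw [← vbn]; exact h.2
              obtain ⟨hm1, hm2⟩ := hσ2mix h0
              exact ⟨fun hh => hm1 (sc_symm hh), fun hh => hm2 (sa_symm hh)⟩
          · rw [hJc c hca]
            refine ⟨?_, ?_, ?_⟩
            · intro h
              have h0 : G'.θ a c = 1 := by rw [← vcn c hca hcb]; exact h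
              exact sc_mono (sc_symm ((hIadj a c (Ne.symm hca)).1 h0)) subset_rfl hA2sub
            · intro h
              have h0 : G'.θ a c = -1 := by rw [← vcn c hca hcb]; exact h
              exact sa_mono (sa_symm ((hIadj a c (Ne.symm hca)).2.1 h0)) subset_rfl hA2sub
            · intro h
              exfalso
              have h0 : G'.θ a c = 0 := by rw [← vcn c hca hcb]; exact h.2
              exact hmA c hca hcb h0
      · have hcd : c ≠ d := fun h => huv (by rw [h])
        by_cases hp : c = a ∧ d = b
        · rw [hp.1, hp.2, hJa, hJc b (Ne.symm hneab)]
          refine ⟨?_, ?_, ?_⟩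
          · intro h
            have h0 : σ1 = 1 := by rw [← vab]; exact h
            exact hσ1SC h0
          · intro h
            have h0 : σ1 = -1 := by rw [← vab]; exact h
            exact hσ1SA h0
          · intro h
            exfalso
            exact hσ1ne (by rw [← vab]; exact h.2)
        · by_cases hq : c = b ∧ d = a
          · rw [hq.1, hq.2, hJc b (Ne.symm hneab), hJa]
            refine ⟨?_, ?_, ?_⟩
            · intro h
              have h0 : σ1 = 1 := by rw [← vba]; exact h
              exact sc_symm (hσ1SC h0)
            · intro h
              have h0 : σ1 = -1 := by rw [← vba]; exact h
              exact sa_symm (hσ1SA h0)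
            · intro h
              exfalso
              exact hσ1ne (by rw [← vba]; exact h.2)
          · have hval := vold c d hp hq
            refine ⟨?_, ?_, ?_⟩
            · intro h
              have h0 : G'.θ c d = 1 := by rw [← hval]; exact h
              exact sc_mono ((hIadj c d hcd).1 h0) (hJsub c) (hJsub d)
            · intro h
              have h0 : G'.θ c d = -1 := by rw [← hval]; exact h
              exact sa_mono ((hIadj c d hcd).2.1 h0) (hJsub c) (hJsub d)
            · intro h
              have h0 : G'.θ c d = 0 := by rw [← hval]; exact h.2
              have hca : c ≠ a := by
                rintro rfl
                have hdb : d = b := by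
                  by_contra hdb
                  exact hmA d (Ne.symm hcd) hdb h0
                exact hp ⟨rfl, hdb⟩
              have hcb : c ≠ b := by
                rintro rfl
                have hda : d = a := by
                  by_contra hda
                  exact hmB d hda (Ne.symm hcd) h0
                exact hq ⟨rfl, hda⟩
              have hda : d ≠ a := by
                rintro rfl
                have hcb2 : c = b := by
                  by_contra hcb2
                  exact hmA c hca hcb2 (by rw [G'.symm]; exact h0)
                exact hq ⟨hcb2, rfl⟩
              rw [hJc c hca, hJc d hda]
              exact (hIadj c d hcd).2.2 ⟨hcd, h0⟩
  have hcard := hmax (Option V') H J hthkH hHlam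
  rw [Nat.card_eq_fintype_card, Nat.card_eq_fintype_card, Fintype.card_option] at hcard
  omega

end Split1Main

section Split2

open scoped Classical

variable (G' : Trigraph V') (a b : V')

/-- Adjacency of the double-split refinement: `inl a` is `a1`, `inr false` is `a2`,
`inl b` is `b1`, `inr true` is `b2`. -/
noncomputable def s2θ : (V' ⊕ Bool) → (V' ⊕ Bool) → ℤ := fun u v =>
  match u, v with
  | Sum.inl c, Sum.inl d => if (c = a ∧ d = b) ∨ (c = b ∧ d = a) then 0 else G'.θ c d
  | Sum.inl c, Sum.inr i =>
      if i then (if c = a then -1 else if c = b then 1 else G'.θ b c)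
      else (if c = a then 1 else if c = b then 1 else G'.θ a c)
  | Sum.inr i, Sum.inl c =>
      if i then (if c = a then -1 else if c = b then 1 else G'.θ b c)
      else (if c = a then 1 else if c = b then 1 else G'.θ a c)
  | Sum.inr _, Sum.inr _ => 0

/-- The double-split trigraph. -/
noncomputable def s2 (hne : a ≠ b) (hθab : G'.θ a b = 0) : Trigraph (V' ⊕ Bool) where
  θ := s2θ G' a b
  range_mem := by
    intro u v
    rcases u with c | i <;> rcases v with d | j <;> simp only [s2θ] <;>
      first | tauto | (split_ifs <;> first | tauto | exact G'.range_mem _ _)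
  symm := by
    intro u v
    rcases u with c | i <;> rcases v with d | j <;> simp only [s2θ]
    split_ifs <;> first | rfl | exact G'.symm _ _ | tauto
  refl_zero := by
    intro u
    rcases u with c | i <;> simp only [s2θ]
    split_ifs with h
    · rfl
    · exact G'.refl_zero c
  semi_matching := by
    have hmA : ∀ c : V', c ≠ a → c ≠ b → G'.θ a c ≠ 0 := fun c hca hcb =>
      G'.semi_matching a b c hne (Ne.symm hca) (Ne.symm hcb) hθab
    have hmB : ∀ c : V', c ≠ a → c ≠ b → G'.θ b c ≠ 0 := fun c hca hcb =>
      G'.semi_matching b a c hne.symm (Ne.symm hcb) (Ne.symm hca)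
        (by rw [G'.symm]; exact hθab)
    intro u v w huv huw hvw h0
    rcases u with c | i
    · rcases v with d | j
      · have h0' : (if (c = a ∧ d = b) ∨ (c = b ∧ d = a) then (0 : ℤ) else G'.θ c d) = 0 := h0
        split_ifs at h0' with hp
        · rcases w with e | k
          · show (if (c = a ∧ e = b) ∨ (c = b ∧ e = a) then (0 : ℤ) else G'.θ c e) ≠ 0
            have hce : c ≠ e := fun h => huw (by rw [h])
            rcases hp with ⟨hc, hd⟩ | ⟨hc, hd⟩
            · have hea : e ≠ a := fun h => hce (hc.trans h.symm)
              have heb : e ≠ b := fun h => hvw (by rw [hd, ← h])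
              have hnp : ¬((c = a ∧ e = b) ∨ (c = b ∧ e = a)) := by
                rintro (⟨-, h2⟩ | ⟨h1, -⟩)
                · exact heb h2
                · exact hne (hc.symm.trans h1)
              rw [if_neg hnp, hc]
              exact hmA e hea heb
            · have hea : e ≠ a := fun h => hvw (by rw [hd, ← h])
              have heb : e ≠ b := fun h => hce (hc.trans h.symm)
              have hnp : ¬((c = a ∧ e = b) ∨ (c = b ∧ e = a)) := by
                rintro (⟨h1, -⟩ | ⟨-, h2⟩)
                · exact hne (h1.symm.trans hc)
                · exact hea h2
              rw [if_neg hnp, hc]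
              exact hmB e hea heb
          · rcases hp with ⟨hc, hd⟩ | ⟨hc, hd⟩
            · rcases k with _ | _
              · show (if c = a then (1 : ℤ) else if c = b then 1 else G'.θ a c) ≠ 0
                rw [if_pos hc]; omega
              · show (if c = a then (-1 : ℤ) else if c = b then 1 else G'.θ b c) ≠ 0
                rw [if_pos hc]; omega
            · rcases k with _ | _
              · show (if c = a then (1 : ℤ) else if c = b then 1 else G'.θ a c) ≠ 0
                rw [if_neg (fun h => hne (h.symm.trans hc)), if_pos hc]; omega
              · show (if c = a then (-1 : ℤ) else if c = b then 1 else G'.θ b c) ≠ 0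
                rw [if_neg (fun h => hne (h.symm.trans hc)), if_pos hc]; omega
        · have hcd : c ≠ d := fun h => huv (by rw [h])
          have hca : c ≠ a := by
            rintro rfl
            have hdb : d = b := by
              by_contra hdb
              exact hmA d (Ne.symm hcd) hdb h0'
            exact hp (Or.inl ⟨rfl, hdb⟩)
          have hcb : c ≠ b := by
            rintro rfl
            have hda : d = a := by
              by_contra hda
              exact hmB d hda (Ne.symm hcd) h0'
            exact hp (Or.inr ⟨rfl, hda⟩)
          rcases w with e | k
          · show (if (c = a ∧ e = b) ∨ (c = b ∧ e = a) then (0 : ℤ) else G'.θ c e) ≠ 0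
            have hnp : ¬((c = a ∧ e = b) ∨ (c = b ∧ e = a)) := by
              rintro (⟨h1, -⟩ | ⟨h1, -⟩)
              · exact hca h1
              · exact hcb h1
            rw [if_neg hnp]
            exact G'.semi_matching c d e hcd (fun h => huw (by rw [h]))
              (fun h => hvw (by rw [h])) h0'
          · rcases k with _ | _
            · show (if c = a then (1 : ℤ) else if c = b then 1 else G'.θ a c) ≠ 0
              rw [if_neg hca, if_neg hcb]
              exact hmA c hca hcb
            · show (if c = a then (-1 : ℤ) else if c = b then 1 else G'.θ b c) ≠ 0
              rw [if_neg hca, if_neg hcb]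
              exact hmB c hca hcb
      · exfalso
        rcases j with _ | _
        · have h0' : (if c = a then (1 : ℤ) else if c = b then 1 else G'.θ a c) = 0 := h0
          by_cases hx : c = a
          · rw [if_pos hx] at h0'; omega
          · by_cases hy : c = b
            · rw [if_neg hx, if_pos hy] at h0'; omega
            · rw [if_neg hx, if_neg hy] at h0'
              exact hmA c hx hy h0'
        · have h0' : (if c = a then (-1 : ℤ) else if c = b then 1 else G'.θ b c) = 0 := h0
          by_cases hx : c = a
          · rw [if_pos hx] at h0'; omega
          · by_cases hy : c = b
            · rw [if_neg hx, if_pos hy] at h0'; omega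
            · rw [if_neg hx, if_neg hy] at h0'
              exact hmB c hx hy h0'
    · rcases v with d | j
      · exfalso
        rcases i with _ | _
        · have h0' : (if d = a then (1 : ℤ) else if d = b then 1 else G'.θ a d) = 0 := h0
          by_cases hx : d = a
          · rw [if_pos hx] at h0'; omega
          · by_cases hy : d = b
            · rw [if_neg hx, if_pos hy] at h0'; omega
            · rw [if_neg hx, if_neg hy] at h0'
              exact hmA d hx hy h0'
        · have h0' : (if d = a then (-1 : ℤ) else if d = b then 1 else G'.θ b d) = 0 := h0
          by_cases hx : d = a
          · rw [if_pos hx] at h0'; omega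
          · by_cases hy : d = b
            · rw [if_neg hx, if_pos hy] at h0'; omega
            · rw [if_neg hx, if_neg hy] at h0'
              exact hmB d hx hy h0'
      · rcases w with e | k
        · rcases i with _ | _
          · show (if e = a then (1 : ℤ) else if e = b then 1 else G'.θ a e) ≠ 0
            split_ifs with hx hy
            · omega
            · omega
            · exact hmA e hx hy
          · show (if e = a then (-1 : ℤ) else if e = b then 1 else G'.θ b e) ≠ 0
            split_ifs with hx hy
            · omega
            · omega
            · exact hmB e hx hy
        · exfalso
          have hij : i ≠ j := fun h => huv (by rw [h])
          have hik : i ≠ k := fun h => huw (by rw [h])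
          have hjk : j ≠ k := fun h => hvw (by rw [h])
          rcases i <;> rcases j <;> rcases k <;> simp_all

/-- The thickening map of the double split. -/
noncomputable def s2J (I : V' → Set V) (A1 A2 B1 B2 : Set V) : (V' ⊕ Bool) → Set V :=
  fun u => match u with
  | Sum.inl c => if c = a then A1 else if c = b then B1 else I c
  | Sum.inr false => A2
  | Sum.inr true => B2

end Split2


section Split2Main

variable {V V' : Type} [Fintype V] [Fintype V']

/-- Key lemma: an optimal antithickening admits no valid double split of a semiedge pair. -/
lemma split2 {G : Trigraph V} {G' : Trigraph V'} {I : V' → Set V} {a b : V'}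
    (hopt : G.OptimalAntithickening G' I) (hab : G'.SemiAdj a b) {A1 A2 B1 B2 : Set V}
    (hA1ne : A1.Nonempty) (hA2ne : A2.Nonempty) (hAu : A1 ∪ A2 = I a) (hAd : Disjoint A1 A2)
    (hB1ne : B1.Nonempty) (hB2ne : B2.Nonempty) (hBu : B1 ∪ B2 = I b) (hBd : Disjoint B1 B2)
    (h12 : G.StronglyAnticomplete A1 B2) (h21 : G.StronglyComplete A2 B1)
    (h11 : ¬G.StronglyComplete A1 B1 ∧ ¬G.StronglyAnticomplete A1 B1)
    (h22 : ¬G.StronglyComplete A2 B2 ∧ ¬G.StronglyAnticomplete A2 B2) : False := by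
  classical
  obtain ⟨hthk, hlam, hmax⟩ := hopt
  obtain ⟨hIprop, hIdisj, hIcov, hIadj⟩ := hthk
  have hneab : a ≠ b := hab.1
  have hθab : G'.θ a b = 0 := hab.2
  have hmA : ∀ c : V', c ≠ a → c ≠ b → G'.θ a c ≠ 0 := fun c hca hcb =>
    G'.semi_matching a b c hneab (Ne.symm hca) (Ne.symm hcb) hθab
  have hmB : ∀ c : V', c ≠ a → c ≠ b → G'.θ b c ≠ 0 := fun c hca hcb =>
    G'.semi_matching b a c hneab.symm (Ne.symm hcb) (Ne.symm hca)
      (by rw [G'.symm]; exact hθab)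
  have hA1sub : A1 ⊆ I a := hAu ▸ Set.subset_union_left
  have hA2sub : A2 ⊆ I a := hAu ▸ Set.subset_union_right
  have hB1sub : B1 ⊆ I b := hBu ▸ Set.subset_union_left
  have hB2sub : B2 ⊆ I b := hBu ▸ Set.subset_union_right
  set H : Trigraph (V' ⊕ Bool) := s2 G' a b hneab hθab with hHdef
  have vLL : ∀ c d : V', H.θ (Sum.inl c) (Sum.inl d) =
      if (c = a ∧ d = b) ∨ (c = b ∧ d = a) then 0 else G'.θ c d := fun _ _ => rfl
  have vLF : ∀ c : V', H.θ (Sum.inl c) (Sum.inr false) =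
      if c = a then 1 else if c = b then 1 else G'.θ a c := fun _ => rfl
  have vFL : ∀ c : V', H.θ (Sum.inr false) (Sum.inl c) =
      if c = a then 1 else if c = b then 1 else G'.θ a c := fun _ => rfl
  have vLT : ∀ c : V', H.θ (Sum.inl c) (Sum.inr true) =
      if c = a then -1 else if c = b then 1 else G'.θ b c := fun _ => rfl
  have vTL : ∀ c : V', H.θ (Sum.inr true) (Sum.inl c) =
      if c = a then -1 else if c = b then 1 else G'.θ b c := fun _ => rfl
  have v11 : H.θ (Sum.inl a) (Sum.inl b) = 0 := by
    rw [vLL]; exact if_pos (Or.inl ⟨rfl, rfl⟩)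
  have v11s : H.θ (Sum.inl b) (Sum.inl a) = 0 := by
    rw [vLL]; exact if_pos (Or.inr ⟨rfl, rfl⟩)
  have vaold : ∀ c : V', c ≠ b → H.θ (Sum.inl a) (Sum.inl c) = G'.θ a c := by
    intro c hcb
    rw [vLL, if_neg]
    rintro (⟨-, h⟩ | ⟨h, -⟩)
    · exact hcb h
    · exact hneab h
  have vbold : ∀ c : V', c ≠ a → H.θ (Sum.inl b) (Sum.inl c) = G'.θ b c := by
    intro c hca
    rw [vLL, if_neg]
    rintro (⟨h, -⟩ | ⟨-, h⟩)
    · exact hneab h.symm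
    · exact hca h
  have volds : ∀ c d : V', ¬(c = a ∧ d = b) → ¬(c = b ∧ d = a) →
      H.θ (Sum.inl c) (Sum.inl d) = G'.θ c d := by
    intro c d hp hq
    rw [vLL, if_neg]
    rintro (h | h)
    · exact hp h
    · exact hq h
  have va2 : H.θ (Sum.inl a) (Sum.inr false) = 1 := by rw [vLF, if_pos rfl]
  have va2s : H.θ (Sum.inr false) (Sum.inl a) = 1 := by rw [vFL, if_pos rfl]
  have v21 : H.θ (Sum.inr false) (Sum.inl b) = 1 := by
    rw [vFL, if_neg (Ne.symm hneab), if_pos rfl]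
  have v21s : H.θ (Sum.inl b) (Sum.inr false) = 1 := by
    rw [vLF, if_neg (Ne.symm hneab), if_pos rfl]
  have v12 : H.θ (Sum.inl a) (Sum.inr true) = -1 := by rw [vLT, if_pos rfl]
  have v12s : H.θ (Sum.inr true) (Sum.inl a) = -1 := by rw [vTL, if_pos rfl]
  have vb2t : H.θ (Sum.inl b) (Sum.inr true) = 1 := by
    rw [vLT, if_neg (Ne.symm hneab), if_pos rfl]
  have vb2ts : H.θ (Sum.inr true) (Sum.inl b) = 1 := by
    rw [vTL, if_neg (Ne.symm hneab), if_pos rfl]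
  have v22 : H.θ (Sum.inr false) (Sum.inr true) = 0 := rfl
  have v22s : H.θ (Sum.inr true) (Sum.inr false) = 0 := rfl
  have v2old : ∀ c : V', c ≠ a → c ≠ b → H.θ (Sum.inr false) (Sum.inl c) = G'.θ a c := by
    intro c hca hcb
    rw [vFL, if_neg hca, if_neg hcb]
  have v2olds : ∀ c : V', c ≠ a → c ≠ b → H.θ (Sum.inl c) (Sum.inr false) = G'.θ a c := by
    intro c hca hcb
    rw [vLF, if_neg hca, if_neg hcb]
  have vtold : ∀ c : V', c ≠ a → c ≠ b → H.θ (Sum.inr true) (Sum.inl c) = G'.θ b c := by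
    intro c hca hcb
    rw [vTL, if_neg hca, if_neg hcb]
  have vtolds : ∀ c : V', c ≠ a → c ≠ b → H.θ (Sum.inl c) (Sum.inr true) = G'.θ b c := by
    intro c hca hcb
    rw [vLT, if_neg hca, if_neg hcb]
  set μ : (V' ⊕ Bool) → V' := fun u => Sum.elim id (fun i => if i then b else a) u with hμdef
  have hμ1 : ∀ c : V', μ (Sum.inl c) = c := fun _ => rfl
  have hμF : μ (Sum.inr false) = a := rfl
  have hμT : μ (Sum.inr true) = b := rfl
  have hsur : ∀ w : V', ∃ u, μ u = w := fun w => ⟨Sum.inl w, rfl⟩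
  have hθtr : ∀ u v : V' ⊕ Bool, μ u ≠ μ v → ¬(μ u = a ∧ μ v = b) →
      ¬(μ u = b ∧ μ v = a) → H.θ u v = G'.θ (μ u) (μ v) := by
    intro u v hneuv hp hq
    rcases u with c | i <;> rcases v with d | j
    · exact volds c d (fun h => hp h) (fun h => hq h)
    · rcases j with _ | _
      · have hca : c ≠ a := hneuv
        have hcb : c ≠ b := fun h => hq ⟨h, rfl⟩
        show H.θ (Sum.inl c) (Sum.inr false) = G'.θ c a
        rw [v2olds c hca hcb, G'.symm]
      · have hcb : c ≠ b := hneuv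
        have hca : c ≠ a := fun h => hp ⟨h, rfl⟩
        show H.θ (Sum.inl c) (Sum.inr true) = G'.θ c b
        rw [vtolds c hca hcb, G'.symm]
    · rcases i with _ | _
      · have hda : d ≠ a := fun h => hneuv (show (a : V') = d from h.symm)
        have hdb : d ≠ b := fun h => hp ⟨rfl, h⟩
        show H.θ (Sum.inr false) (Sum.inl d) = G'.θ a d
        rw [v2old d hda hdb]
      · have hdb : d ≠ b := fun h => hneuv (show (b : V') = d from h.symm)
        have hda : d ≠ a := fun h => hq ⟨rfl, h⟩
        show H.θ (Sum.inr true) (Sum.inl d) = G'.θ b d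
        rw [vtold d hda hdb]
    · rcases i with _ | _ <;> rcases j with _ | _
      · exact absurd rfl hneuv
      · exact absurd ⟨rfl, rfl⟩ hp
      · exact absurd ⟨rfl, rfl⟩ hq
      · exact absurd rfl hneuv
  have hfib : ∀ u v : V' ⊕ Bool, u ≠ v → μ u = μ v → μ u = a ∨ μ u = b := by
    intro u v huv hμuv
    rcases u with c | i <;> rcases v with d | j
    · exact absurd (by rw [show c = d from hμuv]) huv
    · rcases j with _ | _
      · exact Or.inl hμuv
      · exact Or.inr hμuv
    · rcases i with _ | _
      · exact Or.inl rfl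
      · exact Or.inr rfl
    · rcases i with _ | _ <;> rcases j with _ | _
      · exact absurd rfl huv
      · exact Or.inl rfl
      · exact Or.inr rfl
      · exact absurd rfl huv
  have hfibpair : ∀ u v : V' ⊕ Bool, u ≠ v → μ u = μ v →
      (u = Sum.inl a ∧ v = Sum.inr false) ∨ (u = Sum.inr false ∧ v = Sum.inl a) ∨
      (u = Sum.inl b ∧ v = Sum.inr true) ∨ (u = Sum.inr true ∧ v = Sum.inl b) := by
    intro u v huv hμuv
    rcases u with c | i <;> rcases v with d | j
    · exact absurd (by rw [show c = d from hμuv]) huv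
    · rcases j with _ | _
      · exact Or.inl ⟨by rw [show c = a from hμuv], rfl⟩
      · exact Or.inr (Or.inr (Or.inl ⟨by rw [show c = b from hμuv], rfl⟩))
    · rcases i with _ | _
      · exact Or.inr (Or.inl ⟨rfl, by rw [show d = a from hμuv.symm]⟩)
      · exact Or.inr (Or.inr (Or.inr ⟨rfl, by rw [show d = b from hμuv.symm]⟩))
    · rcases i with _ | _ <;> rcases j with _ | _
      · exact absurd rfl huv
      · exact absurd (show (a : V') = b from hμuv) hneab
      · exact absurd (show (b : V') = a from hμuv) (Ne.symm hneab)
      · exact absurd rfl huv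
  have hF1 : ∀ v1 v2 v3 v4 : V' ⊕ Bool, H.IsSquare v1 v2 v3 v4 →
      ¬(Sum.inl a ∈ ({v1, v2, v3, v4} : Set (V' ⊕ Bool)) ∧
        Sum.inr false ∈ ({v1, v2, v3, v4} : Set (V' ⊕ Bool))) := by
    rintro v1 v2 v3 v4 hsq ⟨hx, hy⟩
    rcases square_pair hsq hx hy (by simp) with h | h |
      ⟨z, w, hz, hw, hzx, hzy, hwx, hwy, hzw, hAA1, hAA2, hAA3, hAA4⟩
    · have h0 := h.2
      rw [va2] at h0
      rcases h0 with h' | h' <;> omega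
    · have h0 := h.2
      rw [va2s] at h0
      rcases h0 with h' | h' <;> omega
    · rcases z with e | k
      · by_cases heb : e = b
        · rcases w with f | k'
          · have hfa : f ≠ a := fun h => hwx (by rw [h])
            have hfb : f ≠ b := fun h => hzw (by rw [heb, h])
            have h3 := hAA3.2
            rw [vaold f hfb] at h3
            have h4 := hAA4.2
            rw [v2old f hfa hfb] at h4
            have h0 : G'.θ a f = 0 := by
              rcases h3 with h' | h' <;> rcases h4 with h'' | h'' <;> omega
            exact hmA f hfa hfb h0
          · rcases k' with _ | _
            · exact hwy rfl
            · have h3 := hAA3.2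
              rw [v12] at h3
              rcases h3 with h' | h' <;> omega
        · have hea : e ≠ a := fun h => hzx (by rw [h])
          have h1 := hAA1.2
          rw [vaold e heb] at h1
          have h2 := hAA2.2
          rw [v2old e hea heb] at h2
          have h0 : G'.θ a e = 0 := by
            rcases h1 with h' | h' <;> rcases h2 with h'' | h'' <;> omega
          exact hmA e hea heb h0
      · rcases k with _ | _
        · exact hzy rfl
        · rcases w with f | k'
          · by_cases hfb : f = b
            · have h4 := hAA4.2
              rw [hfb, v21] at h4
              rcases h4 with h' | h' <;> omega
            · have hfa : f ≠ a := fun h => hwx (by rw [h])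
              have h3 := hAA3.2
              rw [vaold f hfb] at h3
              have h4 := hAA4.2
              rw [v2old f hfa hfb] at h4
              have h0 : G'.θ a f = 0 := by
                rcases h3 with h' | h' <;> rcases h4 with h'' | h'' <;> omega
              exact hmA f hfa hfb h0
          · rcases k' with _ | _
            · exact hwy rfl
            · exact hzw rfl
  have hF2 : ∀ v1 v2 v3 v4 : V' ⊕ Bool, H.IsSquare v1 v2 v3 v4 →
      ¬(Sum.inl b ∈ ({v1, v2, v3, v4} : Set (V' ⊕ Bool)) ∧
        Sum.inr true ∈ ({v1, v2, v3, v4} : Set (V' ⊕ Bool))) := by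
    rintro v1 v2 v3 v4 hsq ⟨hx, hy⟩
    rcases square_pair hsq hx hy (by simp) with h | h |
      ⟨z, w, hz, hw, hzx, hzy, hwx, hwy, hzw, hAA1, hAA2, hAA3, hAA4⟩
    · have h0 := h.2
      rw [vb2t] at h0
      rcases h0 with h' | h' <;> omega
    · have h0 := h.2
      rw [vb2ts] at h0
      rcases h0 with h' | h' <;> omega
    · rcases z with e | k
      · by_cases hea : e = a
        · have h2 := hAA2.2
          rw [hea, v12s] at h2
          rcases h2 with h' | h' <;> omega
        · have heb : e ≠ b := fun h => hzx (by rw [h])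
          have h1 := hAA1.2
          rw [vbold e hea] at h1
          have h2 := hAA2.2
          rw [vtold e hea heb] at h2
          have h0 : G'.θ b e = 0 := by
            rcases h1 with h' | h' <;> rcases h2 with h'' | h'' <;> omega
          exact hmB e hea heb h0
      · rcases k with _ | _
        · have h1 := hAA1.2
          rw [v21s] at h1
          rcases h1 with h' | h' <;> omega
        · exact hzy rfl
  have hnofib : ∀ P Q : Set (V' ⊕ Bool), ∀ v1 v2 v3 v4 : V' ⊕ Bool,
      H.IsSquare v1 v2 v3 v4 → ({v1, v2, v3, v4} : Set (V' ⊕ Bool)) ⊆ P ∪ Q →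
      ∀ u ∈ ({v1, v2, v3, v4} : Set (V' ⊕ Bool)),
      ∀ w ∈ ({v1, v2, v3, v4} : Set (V' ⊕ Bool)), u ≠ w → μ u ≠ μ w := by
    intro P Q v1 v2 v3 v4 hsq hsub u hu w hw huw hμuw
    rcases hfibpair u w huw hμuw with ⟨rfl, rfl⟩ | ⟨rfl, rfl⟩ | ⟨rfl, rfl⟩ | ⟨rfl, rfl⟩
    · exact hF1 v1 v2 v3 v4 hsq ⟨hu, hw⟩
    · exact hF1 v1 v2 v3 v4 hsq ⟨hw, hu⟩
    · exact hF2 v1 v2 v3 v4 hsq ⟨hu, hw⟩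
    · exact hF2 v1 v2 v3 v4 hsq ⟨hw, hu⟩
  have himga : ∀ S : Set (V' ⊕ Bool), a ∈ μ '' S → Sum.inl a ∈ S ∨ Sum.inr false ∈ S := by
    rintro S ⟨u, hu, hua⟩
    rcases u with c | i
    · exact Or.inl (by rwa [show c = a from hua] at hu)
    · rcases i with _ | _
      · exact Or.inr hu
      · exact absurd (show (b : V') = a from hua) (Ne.symm hneab)
  have himgb : ∀ S : Set (V' ⊕ Bool), b ∈ μ '' S → Sum.inl b ∈ S ∨ Sum.inr true ∈ S := by
    rintro S ⟨u, hu, hub⟩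
    rcases u with c | i
    · exact Or.inl (by rwa [show c = b from hub] at hu)
    · rcases i with _ | _
      · exact absurd (show (a : V') = b from hub) hneab
      · exact Or.inr hu
  -- handler: a1 ∈ P, a2 ∈ Q impossible
  have hX1 : ∀ P Q : Set (V' ⊕ Bool), H.SquareConnected P Q →
      Sum.inl a ∈ P → Sum.inr false ∈ Q → False := by
    intro P Q hsqc h1P h2Q
    have hPcl := hsqc.1.2.2.2.1
    have hdisj := hsqc.1.2.2.1
    obtain ⟨ph, ps, hphP, hpsP, hne2, hanti, hadj⟩ := sqConn_partner (sqConn_symm hsqc) h2Q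
    rcases ph with c | i
    · by_cases hca : c = a
      · have e := hanti.2
        rw [hca, va2s] at e
        rcases e with h | h <;> omega
      · by_cases hcb : c = b
        · have e := hanti.2
          rw [hcb, v21] at e
          rcases e with h | h <;> omega
        · have e := hanti.2
          rw [v2old c hca hcb] at e
          have e2 : H.θ (Sum.inl a) (Sum.inl c) = 1 :=
            hPcl h1P hphP (by simp [Ne.symm hca])
          rw [vaold c hcb] at e2
          rcases e with h | h <;> omega
    · rcases i with _ | _
      · exact (hdisj.ne_of_mem hphP h2Q) rfl
      · have e2 : H.θ (Sum.inl a) (Sum.inr true) = 1 := hPcl h1P hphP (by simp)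
        rw [v12] at e2
        omega
  -- handler: a1, a2 both in P
  have hsame : ∀ P Q : Set (V' ⊕ Bool), H.SquareConnected P Q →
      Sum.inl a ∈ P → Sum.inr false ∈ P → False := by
    intro P Q hsqc h1P h2P
    have hPcl := hsqc.1.2.2.2.1
    have hdisj := hsqc.1.2.2.1
    have hom := hsqc.1.2.2.2.2.2.2
    have hb1P : Sum.inl b ∉ P := by
      intro hh
      have e : H.θ (Sum.inl a) (Sum.inl b) = 1 := hPcl h1P hh (by simp [hneab])
      rw [v11] at e
      omega
    have hb2P : Sum.inr true ∉ P := by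
      intro hh
      have e : H.θ (Sum.inl a) (Sum.inr true) = 1 := hPcl h1P hh (by simp)
      rw [v12] at e
      omega
    have hb1Q : Sum.inl b ∈ Q := by
      by_contra hh
      have hout : Sum.inl b ∉ P ∪ Q := by rintro (h | h); exacts [hb1P h, hh h]
      rcases (hom _ hout).1 with h | h
      · have e : H.θ (Sum.inl b) (Sum.inl a) = 1 := h _ rfl _ h1P
        rw [v11s] at e
        omega
      · have e : H.θ (Sum.inl b) (Sum.inl a) = -1 := h _ rfl _ h1P
        rw [v11s] at e
        omega
    have hb2Q : Sum.inr true ∈ Q := by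
      by_contra hh
      have hout : Sum.inr true ∉ P ∪ Q := by rintro (h | h); exacts [hb2P h, hh h]
      rcases (hom _ hout).1 with h | h
      · have e : H.θ (Sum.inr true) (Sum.inr false) = 1 := h _ rfl _ h2P
        rw [v22s] at e
        omega
      · have e : H.θ (Sum.inr true) (Sum.inr false) = -1 := h _ rfl _ h2P
        rw [v22s] at e
        omega
    refine hlam ⟨_, _, transfer G' hab H μ hsur hθtr hfib hsqc (hnofib P Q) ?_ ?_ ?_ ?_ ?_ ?_⟩
    · rintro ⟨-, hbb⟩
      rcases himgb P hbb with h | h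
      · exact hb1P h
      · exact hb2P h
    · rintro ⟨ha', -⟩
      rcases himga Q ha' with h | h
      · exact (hdisj.ne_of_mem h1P h) rfl
      · exact (hdisj.ne_of_mem h2P h) rfl
    · rintro ⟨-, ha'⟩
      rcases himga Q ha' with h | h
      · exact (hdisj.ne_of_mem h1P h) rfl
      · exact (hdisj.ne_of_mem h2P h) rfl
    · rintro ⟨hbb, -⟩
      rcases himgb P hbb with h | h
      · exact hb1P h
      · exact hb2P h
    · intro h
      exact absurd (Or.inl ⟨Sum.inl a, h1P, rfl⟩) h
    · intro h
      exact absurd (Or.inr ⟨Sum.inl b, hb1Q, rfl⟩) h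
  -- handler: a1 ∈ P, a2 outside
  have hinoutA : ∀ P Q : Set (V' ⊕ Bool), H.SquareConnected P Q →
      Sum.inl a ∈ P → Sum.inr false ∉ P ∪ Q → False := by
    intro P Q hsqc h1P h2out
    have hPcl := hsqc.1.2.2.2.1
    have hdisj := hsqc.1.2.2.1
    have hom := hsqc.1.2.2.2.2.2.2
    have hb2P : Sum.inr true ∉ P := by
      intro hh
      have e : H.θ (Sum.inl a) (Sum.inr true) = 1 := hPcl h1P hh (by simp)
      rw [v12] at e
      omega
    have hb2Q : Sum.inr true ∉ Q := by
      intro hh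
      rcases (hom _ h2out).2 with h | h
      · have e : H.θ (Sum.inr false) (Sum.inr true) = 1 := h _ rfl _ hh
        rw [v22] at e
        omega
      · have e : H.θ (Sum.inr false) (Sum.inr true) = -1 := h _ rfl _ hh
        rw [v22] at e
        omega
    have hb1P : Sum.inl b ∉ P := by
      intro hh
      have e : H.θ (Sum.inl a) (Sum.inl b) = 1 := hPcl h1P hh (by simp [hneab])
      rw [v11] at e
      omega
    have hb1Q : Sum.inl b ∈ Q := by
      by_contra hh
      have hout : Sum.inl b ∉ P ∪ Q := by rintro (h | h); exacts [hb1P h, hh h]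
      rcases (hom _ hout).1 with h | h
      · have e : H.θ (Sum.inl b) (Sum.inl a) = 1 := h _ rfl _ h1P
        rw [v11s] at e
        omega
      · have e : H.θ (Sum.inl b) (Sum.inl a) = -1 := h _ rfl _ h1P
        rw [v11s] at e
        omega
    refine hlam ⟨_, _, transfer G' hab H μ hsur hθtr hfib hsqc (hnofib P Q) ?_ ?_ ?_ ?_ ?_ ?_⟩
    · rintro ⟨-, hbb⟩
      rcases himgb P hbb with h | h
      · exact hb1P h
      · exact hb2P h
    · rintro ⟨ha', -⟩
      rcases himga Q ha' with h | h
      · exact (hdisj.ne_of_mem h1P h) rfl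
      · exact h2out (Or.inr h)
    · rintro ⟨-, ha'⟩
      rcases himga Q ha' with h | h
      · exact (hdisj.ne_of_mem h1P h) rfl
      · exact h2out (Or.inr h)
    · rintro ⟨hbb, -⟩
      rcases himgb P hbb with h | h
      · exact hb1P h
      · exact hb2P h
    · intro h
      exact absurd (Or.inl ⟨Sum.inl a, h1P, rfl⟩) h
    · intro h
      exact absurd (Or.inr ⟨Sum.inl b, hb1Q, rfl⟩) h
  -- handler: a2 ∈ P, a1 outside
  have hinoutB : ∀ P Q : Set (V' ⊕ Bool), H.SquareConnected P Q →
      Sum.inr false ∈ P → Sum.inl a ∉ P ∪ Q → False := by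
    intro P Q hsqc h2P h1out
    have hPcl := hsqc.1.2.2.2.1
    have hdisj := hsqc.1.2.2.1
    have hom := hsqc.1.2.2.2.2.2.2
    have hb2P : Sum.inr true ∉ P := by
      intro hh
      have e : H.θ (Sum.inr false) (Sum.inr true) = 1 := hPcl h2P hh (by simp)
      rw [v22] at e
      omega
    have hb1P : Sum.inl b ∉ P := by
      intro hh
      rcases (hom _ h1out).1 with h | h
      · have e : H.θ (Sum.inl a) (Sum.inl b) = 1 := h _ rfl _ hh
        rw [v11] at e
        omega
      · have e : H.θ (Sum.inl a) (Sum.inl b) = -1 := h _ rfl _ hh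
        rw [v11] at e
        omega
    have hb1Q : Sum.inl b ∉ Q := by
      intro hh
      rcases (hom _ h1out).2 with h | h
      · have e : H.θ (Sum.inl a) (Sum.inl b) = 1 := h _ rfl _ hh
        rw [v11] at e
        omega
      · have e : H.θ (Sum.inl a) (Sum.inl b) = -1 := h _ rfl _ hh
        rw [v11] at e
        omega
    have hb2Q : Sum.inr true ∈ Q := by
      by_contra hh
      have hout : Sum.inr true ∉ P ∪ Q := by rintro (h | h); exacts [hb2P h, hh h]
      rcases (hom _ hout).1 with h | h
      · have e : H.θ (Sum.inr true) (Sum.inr false) = 1 := h _ rfl _ h2P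
        rw [v22s] at e
        omega
      · have e : H.θ (Sum.inr true) (Sum.inr false) = -1 := h _ rfl _ h2P
        rw [v22s] at e
        omega
    refine hlam ⟨_, _, transfer G' hab H μ hsur hθtr hfib hsqc (hnofib P Q) ?_ ?_ ?_ ?_ ?_ ?_⟩
    · rintro ⟨-, hbb⟩
      rcases himgb P hbb with h | h
      · exact hb1P h
      · exact hb2P h
    · rintro ⟨ha', -⟩
      rcases himga Q ha' with h | h
      · exact h1out (Or.inr h)
      · exact (hdisj.ne_of_mem h2P h) rfl
    · rintro ⟨-, ha'⟩
      rcases himga Q ha' with h | h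
      · exact h1out (Or.inr h)
      · exact (hdisj.ne_of_mem h2P h) rfl
    · rintro ⟨hbb, -⟩
      rcases himgb P hbb with h | h
      · exact hb1P h
      · exact hb2P h
    · intro h
      exact absurd (Or.inl ⟨Sum.inr false, h2P, rfl⟩) h
    · intro h
      exact absurd (Or.inr ⟨Sum.inr true, hb2Q, rfl⟩) h
  -- handler: both a-vertices outside
  have hbothout : ∀ P Q : Set (V' ⊕ Bool), H.SquareConnected P Q →
      Sum.inl a ∉ P ∪ Q → Sum.inr false ∉ P ∪ Q → False := by
    intro P Q hsqc h1out h2out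
    have hom := hsqc.1.2.2.2.2.2.2
    have hb1P : Sum.inl b ∉ P := by
      intro hh
      rcases (hom _ h1out).1 with h | h
      · have e : H.θ (Sum.inl a) (Sum.inl b) = 1 := h _ rfl _ hh
        rw [v11] at e
        omega
      · have e : H.θ (Sum.inl a) (Sum.inl b) = -1 := h _ rfl _ hh
        rw [v11] at e
        omega
    have hb1Q : Sum.inl b ∉ Q := by
      intro hh
      rcases (hom _ h1out).2 with h | h
      · have e : H.θ (Sum.inl a) (Sum.inl b) = 1 := h _ rfl _ hh
        rw [v11] at e
        omega
      · have e : H.θ (Sum.inl a) (Sum.inl b) = -1 := h _ rfl _ hh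
        rw [v11] at e
        omega
    have hb2P : Sum.inr true ∉ P := by
      intro hh
      rcases (hom _ h2out).1 with h | h
      · have e : H.θ (Sum.inr false) (Sum.inr true) = 1 := h _ rfl _ hh
        rw [v22] at e
        omega
      · have e : H.θ (Sum.inr false) (Sum.inr true) = -1 := h _ rfl _ hh
        rw [v22] at e
        omega
    have hb2Q : Sum.inr true ∉ Q := by
      intro hh
      rcases (hom _ h2out).2 with h | h
      · have e : H.θ (Sum.inr false) (Sum.inr true) = 1 := h _ rfl _ hh
        rw [v22] at e
        omega
      · have e : H.θ (Sum.inr false) (Sum.inr true) = -1 := h _ rfl _ hh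
        rw [v22] at e
        omega
    refine hlam ⟨_, _, transfer G' hab H μ hsur hθtr hfib hsqc (hnofib P Q) ?_ ?_ ?_ ?_ ?_ ?_⟩
    · rintro ⟨ha', -⟩
      rcases himga P ha' with h | h
      · exact h1out (Or.inl h)
      · exact h2out (Or.inl h)
    · rintro ⟨ha', -⟩
      rcases himga Q ha' with h | h
      · exact h1out (Or.inr h)
      · exact h2out (Or.inr h)
    · rintro ⟨ha', -⟩
      rcases himga P ha' with h | h
      · exact h1out (Or.inl h)
      · exact h2out (Or.inl h)
    · rintro ⟨hbb, -⟩
      rcases himgb P hbb with h | h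
      · exact hb1P h
      · exact hb2P h
    · intro _
      rintro (h | h)
      · rcases himgb P h with h' | h'
        · exact hb1P h'
        · exact hb2P h'
      · rcases himgb Q h with h' | h'
        · exact hb1Q h'
        · exact hb2Q h'
    · intro _
      rintro (h | h)
      · rcases himga P h with h' | h'
        · exact h1out (Or.inl h')
        · exact h2out (Or.inl h')
      · rcases himga Q h with h' | h'
        · exact h1out (Or.inr h')
        · exact h2out (Or.inr h')
  -- laminarity
  have hHlam : H.Laminar := by
    rintro ⟨P, Q, hsqc⟩
    by_cases h1P : Sum.inl a ∈ P
    · by_cases h2P : Sum.inr false ∈ P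
      · exact hsame P Q hsqc h1P h2P
      · by_cases h2Q : Sum.inr false ∈ Q
        · exact hX1 P Q hsqc h1P h2Q
        · exact hinoutA P Q hsqc h1P (by rintro (h | h); exacts [h2P h, h2Q h])
    · by_cases h1Q : Sum.inl a ∈ Q
      · by_cases h2Q : Sum.inr false ∈ Q
        · exact hsame Q P (sqConn_symm hsqc) h1Q h2Q
        · by_cases h2P : Sum.inr false ∈ P
          · exact hX1 Q P (sqConn_symm hsqc) h1Q h2P
          · exact hinoutA Q P (sqConn_symm hsqc) h1Q
              (by rintro (h | h); exacts [h2Q h, h2P h])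
      · by_cases h2P : Sum.inr false ∈ P
        · exact hinoutB P Q hsqc h2P (by rintro (h | h); exacts [h1P h, h1Q h])
        · by_cases h2Q : Sum.inr false ∈ Q
          · exact hinoutB Q P (sqConn_symm hsqc) h2Q
              (by rintro (h | h); exacts [h1Q h, h1P h])
          · exact hbothout P Q hsqc (by rintro (h | h); exacts [h1P h, h1Q h])
              (by rintro (h | h); exacts [h2P h, h2Q h])
  -- the thickening map
  set J : (V' ⊕ Bool) → Set V := s2J a b I A1 A2 B1 B2 with hJdef
  have hJ1 : J (Sum.inl a) = A1 := by simp [hJdef, s2J]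
  have hJ2 : J (Sum.inr false) = A2 := rfl
  have hJ3 : J (Sum.inl b) = B1 := by simp [hJdef, s2J, Ne.symm hneab]
  have hJ4 : J (Sum.inr true) = B2 := rfl
  have hJc : ∀ c : V', c ≠ a → c ≠ b → J (Sum.inl c) = I c := by
    intro c h h'
    simp [hJdef, s2J, h, h']
  have hJsub : ∀ c : V', J (Sum.inl c) ⊆ I c := by
    intro c
    by_cases h : c = a
    · rw [h, hJ1]
      exact hA1sub
    · by_cases h' : c = b
      · rw [h', hJ3]
        exact hB1sub
      · rw [hJc c h h']
  have hthkH : G.IsThickening H J := by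
    refine ⟨?_, ?_, ?_, ?_⟩
    · intro u
      rcases u with c | i
      · by_cases h : c = a
        · rw [h, hJ1]
          exact ⟨hA1ne, ((hIprop a).2).mono hA1sub⟩
        · by_cases h' : c = b
          · rw [h', hJ3]
            exact ⟨hB1ne, ((hIprop b).2).mono hB1sub⟩
          · rw [hJc c h h']
            exact hIprop c
      · rcases i with _ | _
        · exact ⟨hA2ne, ((hIprop a).2).mono hA2sub⟩
        · exact ⟨hB2ne, ((hIprop b).2).mono hB2sub⟩
    · intro u v huv
      have key : ∀ u : V' ⊕ Bool, J u ⊆ I (μ u) := by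
        intro u
        rcases u with c | i
        · exact hJsub c
        · rcases i with _ | _
          · exact hA2sub
          · exact hB2sub
      by_cases hμuv : μ u = μ v
      · rcases hfibpair u v huv hμuv with ⟨h1, h2⟩ | ⟨h1, h2⟩ | ⟨h1, h2⟩ | ⟨h1, h2⟩ <;>
          rw [h1, h2]
        · rw [hJ1]
          exact hAd
        · rw [hJ1]
          exact hAd.symm
        · rw [hJ3]
          exact hBd
        · rw [hJ3]
          exact hBd.symm
      · exact (hIdisj (μ u) (μ v) hμuv).mono (key u) (key v)
    · apply Set.eq_univ_of_forall
      intro x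
      have hx : x ∈ ⋃ v, I v := by rw [hIcov]; trivial
      rw [Set.mem_iUnion] at hx
      obtain ⟨c, hc⟩ := hx
      rw [Set.mem_iUnion]
      by_cases h : c = a
      · rw [h] at hc
        rw [← hAu] at hc
        rcases hc with h' | h'
        · exact ⟨Sum.inl a, by rw [hJ1]; exact h'⟩
        · exact ⟨Sum.inr false, h'⟩
      · by_cases h' : c = b
        · rw [h'] at hc
          rw [← hBu] at hc
          rcases hc with h'' | h''
          · exact ⟨Sum.inl b, by rw [hJ3]; exact h''⟩
          · exact ⟨Sum.inr true, h''⟩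
        · exact ⟨Sum.inl c, by rw [hJc c h h']; exact hc⟩
    · intro u v huv
      rcases u with c | i <;> rcases v with d | j
      · have hcd : c ≠ d := fun h => huv (by rw [h])
        by_cases hp : c = a ∧ d = b
        · rw [hp.1, hp.2, hJ1, hJ3]
          refine ⟨?_, ?_, ?_⟩
          · intro h
            exfalso
            have e : H.θ (Sum.inl a) (Sum.inl b) = 1 := h
            rw [v11] at e
            omega
          · intro h
            exfalso
            have e : H.θ (Sum.inl a) (Sum.inl b) = -1 := h
            rw [v11] at e
            omega
          · intro _
            exact h11
        · by_cases hq : c = b ∧ d = a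
          · rw [hq.1, hq.2, hJ3, hJ1]
            refine ⟨?_, ?_, ?_⟩
            · intro h
              exfalso
              have e : H.θ (Sum.inl b) (Sum.inl a) = 1 := h
              rw [v11s] at e
              omega
            · intro h
              exfalso
              have e : H.θ (Sum.inl b) (Sum.inl a) = -1 := h
              rw [v11s] at e
              omega
            · intro _
              exact ⟨fun hh => h11.1 (sc_symm hh), fun hh => h11.2 (sa_symm hh)⟩
          · have hval := volds c d (fun h => hp h) (fun h => hq h)
            refine ⟨?_, ?_, ?_⟩
            · intro h
              have h0 : G'.θ c d = 1 := by rw [← hval]; exact h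
              exact sc_mono ((hIadj c d hcd).1 h0) (hJsub c) (hJsub d)
            · intro h
              have h0 : G'.θ c d = -1 := by rw [← hval]; exact h
              exact sa_mono ((hIadj c d hcd).2.1 h0) (hJsub c) (hJsub d)
            · intro h
              have h0 : G'.θ c d = 0 := by rw [← hval]; exact h.2
              have hca : c ≠ a := by
                rintro rfl
                have hdb : d = b := by
                  by_contra hdb
                  exact hmA d (Ne.symm hcd) hdb h0
                exact hp ⟨rfl, hdb⟩
              have hcb : c ≠ b := by
                rintro rfl
                have hda : d = a := by
                  by_contra hda
                  exact hmB d hda (Ne.symm hcd) h0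
                exact hq ⟨rfl, hda⟩
              have hda : d ≠ a := by
                rintro rfl
                have hcb2 : c = b := by
                  by_contra hcb2
                  exact hmA c hca hcb2 (by rw [G'.symm]; exact h0)
                exact hq ⟨hcb2, rfl⟩
              have hdb : d ≠ b := by
                rintro rfl
                have hca2 : c = a := by
                  by_contra hca2
                  exact hmB c hca2 hcb (by rw [G'.symm]; exact h0)
                exact hp ⟨hca2, rfl⟩
              rw [hJc c hca hcb, hJc d hda hdb]
              exact (hIadj c d hcd).2.2 ⟨hcd, h0⟩
      · rcases j with _ | _
        · rw [hJ2]
          by_cases hca : c = a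
          · rw [hca, hJ1]
            refine ⟨?_, ?_, ?_⟩
            · intro _
              exact fun x hx y hy => (hIprop a).2 (hA1sub hx) (hA2sub hy) (hAd.ne_of_mem hx hy)
            · intro h
              exfalso
              have e : H.θ (Sum.inl a) (Sum.inr false) = -1 := h
              rw [va2] at e
              omega
            · intro h
              exfalso
              have e := h.2
              rw [va2] at e
              omega
          · by_cases hcb : c = b
            · rw [hcb, hJ3]
              refine ⟨?_, ?_, ?_⟩
              · intro _
                exact sc_symm h21
              · intro h
                exfalso
                have e : H.θ (Sum.inl b) (Sum.inr false) = -1 := h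
                rw [v21s] at e
                omega
              · intro h
                exfalso
                have e := h.2
                rw [v21s] at e
                omega
            · rw [hJc c hca hcb]
              refine ⟨?_, ?_, ?_⟩
              · intro h
                have h0 : G'.θ a c = 1 := by rw [← v2olds c hca hcb]; exact h
                exact sc_mono (sc_symm ((hIadj a c (Ne.symm hca)).1 h0)) subset_rfl hA2sub
              · intro h
                have h0 : G'.θ a c = -1 := by rw [← v2olds c hca hcb]; exact h
                exact sa_mono (sa_symm ((hIadj a c (Ne.symm hca)).2.1 h0)) subset_rfl hA2sub
              · intro h
                exfalso
                have h0 : G'.θ a c = 0 := by rw [← v2olds c hca hcb]; exact h.2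
                exact hmA c hca hcb h0
        · rw [hJ4]
          by_cases hca : c = a
          · rw [hca, hJ1]
            refine ⟨?_, ?_, ?_⟩
            · intro h
              exfalso
              have e : H.θ (Sum.inl a) (Sum.inr true) = 1 := h
              rw [v12] at e
              omega
            · intro _
              exact h12
            · intro h
              exfalso
              have e := h.2
              rw [v12] at e
              omega
          · by_cases hcb : c = b
            · rw [hcb, hJ3]
              refine ⟨?_, ?_, ?_⟩
              · intro _
                exact fun x hx y hy => (hIprop b).2 (hB1sub hx) (hB2sub hy) (hBd.ne_of_mem hx hy)
              · intro h
                exfalso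
                have e : H.θ (Sum.inl b) (Sum.inr true) = -1 := h
                rw [vb2t] at e
                omega
              · intro h
                exfalso
                have e := h.2
                rw [vb2t] at e
                omega
            · rw [hJc c hca hcb]
              refine ⟨?_, ?_, ?_⟩
              · intro h
                have h0 : G'.θ b c = 1 := by rw [← vtolds c hca hcb]; exact h
                exact sc_mono (sc_symm ((hIadj b c (Ne.symm hcb)).1 h0)) subset_rfl hB2sub
              · intro h
                have h0 : G'.θ b c = -1 := by rw [← vtolds c hca hcb]; exact h
                exact sa_mono (sa_symm ((hIadj b c (Ne.symm hcb)).2.1 h0)) subset_rfl hB2sub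
              · intro h
                exfalso
                have h0 : G'.θ b c = 0 := by rw [← vtolds c hca hcb]; exact h.2
                exact hmB c hca hcb h0
      · rcases i with _ | _
        · rw [hJ2]
          by_cases hda : d = a
          · rw [hda, hJ1]
            refine ⟨?_, ?_, ?_⟩
            · intro _
              exact fun x hx y hy => (hIprop a).2 (hA2sub hx) (hA1sub hy)
                (Ne.symm (hAd.ne_of_mem hy hx))
            · intro h
              exfalso
              have e : H.θ (Sum.inr false) (Sum.inl a) = -1 := h
              rw [va2s] at e
              omega
            · intro h
              exfalso
              have e := h.2
              rw [va2s] at e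
              omega
          · by_cases hdb : d = b
            · rw [hdb, hJ3]
              refine ⟨?_, ?_, ?_⟩
              · intro _
                exact h21
              · intro h
                exfalso
                have e : H.θ (Sum.inr false) (Sum.inl b) = -1 := h
                rw [v21] at e
                omega
              · intro h
                exfalso
                have e := h.2
                rw [v21] at e
                omega
            · rw [hJc d hda hdb]
              refine ⟨?_, ?_, ?_⟩
              · intro h
                have h0 : G'.θ a d = 1 := by rw [← v2old d hda hdb]; exact h
                exact sc_mono ((hIadj a d (Ne.symm hda)).1 h0) hA2sub subset_rfl
              · intro h
                have h0 : G'.θ a d = -1 := by rw [← v2old d hda hdb]; exact h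
                exact sa_mono ((hIadj a d (Ne.symm hda)).2.1 h0) hA2sub subset_rfl
              · intro h
                exfalso
                have h0 : G'.θ a d = 0 := by rw [← v2old d hda hdb]; exact h.2
                exact hmA d hda hdb h0
        · rw [hJ4]
          by_cases hda : d = a
          · rw [hda, hJ1]
            refine ⟨?_, ?_, ?_⟩
            · intro h
              exfalso
              have e : H.θ (Sum.inr true) (Sum.inl a) = 1 := h
              rw [v12s] at e
              omega
            · intro _
              exact sa_symm h12
            · intro h
              exfalso
              have e := h.2
              rw [v12s] at e
              omega
          · by_cases hdb : d = b
            · rw [hdb, hJ3]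
              refine ⟨?_, ?_, ?_⟩
              · intro _
                exact fun x hx y hy => (hIprop b).2 (hB2sub hx) (hB1sub hy)
                  (Ne.symm (hBd.ne_of_mem hy hx))
              · intro h
                exfalso
                have e : H.θ (Sum.inr true) (Sum.inl b) = -1 := h
                rw [vb2ts] at e
                omega
              · intro h
                exfalso
                have e := h.2
                rw [vb2ts] at e
                omega
            · rw [hJc d hda hdb]
              refine ⟨?_, ?_, ?_⟩
              · intro h
                have h0 : G'.θ b d = 1 := by rw [← vtold d hda hdb]; exact h
                exact sc_mono ((hIadj b d (Ne.symm hdb)).1 h0) hB2sub subset_rfl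
              · intro h
                have h0 : G'.θ b d = -1 := by rw [← vtold d hda hdb]; exact h
                exact sa_mono ((hIadj b d (Ne.symm hdb)).2.1 h0) hB2sub subset_rfl
              · intro h
                exfalso
                have h0 : G'.θ b d = 0 := by rw [← vtold d hda hdb]; exact h.2
                exact hmB d hda hdb h0
      · rcases i with _ | _ <;> rcases j with _ | _
        · exact absurd rfl huv
        · refine ⟨?_, ?_, ?_⟩
          · intro h
            exfalso
            have e : H.θ (Sum.inr false) (Sum.inr true) = 1 := h
            rw [v22] at e
            omega
          · intro h
            exfalso
            have e : H.θ (Sum.inr false) (Sum.inr true) = -1 := h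
            rw [v22] at e
            omega
          · intro _
            exact h22
        · refine ⟨?_, ?_, ?_⟩
          · intro h
            exfalso
            have e : H.θ (Sum.inr true) (Sum.inr false) = 1 := h
            rw [v22s] at e
            omega
          · intro h
            exfalso
            have e : H.θ (Sum.inr true) (Sum.inr false) = -1 := h
            rw [v22s] at e
            omega
          · intro _
            exact ⟨fun hh => h22.1 (sc_symm hh), fun hh => h22.2 (sa_symm hh)⟩
        · exact absurd rfl huv
  have hcard := hmax (V' ⊕ Bool) H J hthkH hHlam
  rw [Nat.card_eq_fintype_card, Nat.card_eq_fintype_card, Fintype.card_sum,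
    Fintype.card_bool] at hcard
  omega

end Split2Main

section SideMain

variable {V V' : Type} [Fintype V] [Fintype V']

/-- Every partition of the `a`-piece of a semiedge of an optimal antithickening is met by a
square inside the union of the two pieces. -/
lemma side {G : Trigraph V} {G' : Trigraph V'} {I : V' → Set V} {a b : V'}
    (hopt : G.OptimalAntithickening G' I) (hab : G'.SemiAdj a b) :
    ∀ A1 A2 : Set V, A1.Nonempty → A2.Nonempty → A1 ∪ A2 = I a → Disjoint A1 A2 →
      G.SquareMeets (I a ∪ I b) A1 A2 := by
  intro A1 A2 hA1 hA2 hAu hAd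
  by_contra hno
  obtain ⟨hIprop, hIdisj, hIcov, hIadj⟩ := hopt.1
  have hneab : a ≠ b := hab.1
  have hba : G'.SemiAdj b a := ⟨hneab.symm, by rw [G'.symm]; exact hab.2⟩
  have hdisjAB : Disjoint (I a) (I b) := hIdisj a b hneab
  have hAcl := (hIprop a).2
  have hBcl := (hIprop b).2
  have hA1sub : A1 ⊆ I a := hAu ▸ Set.subset_union_left
  have hA2sub : A2 ⊆ I a := hAu ▸ Set.subset_union_right
  have hA1' := hA1
  have hA2' := hA2
  obtain ⟨u0, hu0⟩ := hA1'
  obtain ⟨w0, hw0⟩ := hA2'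
  have huw0 : u0 ≠ w0 := hAd.ne_of_mem hu0 hw0
  have hIa2 : ∀ x ∈ I a, ∃ x' ∈ I a, x' ≠ x := by
    intro x hx
    by_cases h : u0 = x
    · exact ⟨w0, hA2sub hw0, fun hh => huw0 (h.trans hh.symm)⟩
    · exact ⟨u0, hA1sub hu0, h⟩
  have hrow : ∀ x ∈ I a, (∃ y ∈ I b, G.θ x y ≠ 1) ∧ (∃ y ∈ I b, G.θ x y ≠ -1) := by
    intro x hx
    obtain ⟨x', hx', hxx'⟩ := hIa2 x hx
    obtain ⟨s1, s2, s3, s4⟩ := singleton_partition hx hx' hxx'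
    constructor
    · by_contra hc
      push_neg at hc
      refine split1 hopt hab s1 s2 s3 s4 (Or.inl ?_)
      rintro u hu y hy
      rw [Set.mem_singleton_iff] at hu
      subst hu
      exact hc y hy
    · by_contra hc
      push_neg at hc
      refine split1 hopt hab s1 s2 s3 s4 (Or.inr ?_)
      rintro u hu y hy
      rw [Set.mem_singleton_iff] at hu
      subst hu
      exact hc y hy
  have hIb2 : ∀ y ∈ I b, ∃ y' ∈ I b, y' ≠ y := by
    have h2 : ∃ y1 ∈ I b, ∃ y2 ∈ I b, y1 ≠ y2 := by
      by_contra hc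
      push_neg at hc
      obtain ⟨y0, hy0⟩ := (hIprop b).1
      have hz : ∀ x ∈ I a, G.θ x y0 = 0 := by
        intro x hx
        obtain ⟨⟨y, hy, t1⟩, ⟨y', hy', t2⟩⟩ := hrow x hx
        have e1 : y = y0 := hc y hy y0 hy0
        have e2 : y' = y0 := hc y' hy' y0 hy0
        rw [e1] at t1
        rw [e2] at t2
        rcases G.range_mem x y0 with h | h | h
        · exact absurd h t1
        · exact h
        · exact absurd h t2
      have hz1 := hz u0 (hA1sub hu0)
      have hz2 := hz w0 (hA2sub hw0)
      have hne1 : y0 ≠ u0 := fun h => (hdisjAB.ne_of_mem (hA1sub hu0) hy0) h.symm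
      have hne2 : y0 ≠ w0 := fun h => (hdisjAB.ne_of_mem (hA2sub hw0) hy0) h.symm
      exact G.semi_matching y0 u0 w0 hne1 hne2 huw0 (by rw [G.symm]; exact hz1)
        (by rw [G.symm]; exact hz2)
    obtain ⟨y1, hy1, y2, hy2, hy12⟩ := h2
    intro y hy
    by_cases h : y1 = y
    · exact ⟨y2, hy2, fun hh => hy12 (hh.trans h.symm).symm⟩
    · exact ⟨y1, hy1, h⟩
  have hcol : ∀ y ∈ I b, (∃ x ∈ I a, G.θ x y ≠ 1) ∧ (∃ x ∈ I a, G.θ x y ≠ -1) := by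
    intro y hy
    obtain ⟨y', hy', hyy'⟩ := hIb2 y hy
    obtain ⟨s1, s2, s3, s4⟩ := singleton_partition hy hy' hyy'
    constructor
    · by_contra hc
      push_neg at hc
      refine split1 hopt hba s1 s2 s3 s4 (Or.inl ?_)
      rintro u hu x hx
      rw [Set.mem_singleton_iff] at hu
      rw [hu]
      show G.θ y x = 1
      rw [G.symm]
      exact hc x hx
    · by_contra hc
      push_neg at hc
      refine split1 hopt hba s1 s2 s3 s4 (Or.inr ?_)
      rintro u hu x hx
      rw [Set.mem_singleton_iff] at hu
      rw [hu]
      show G.θ y x = -1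
      rw [G.symm]
      exact hc x hx
  have hnocross : ¬∃ x1 ∈ A1, ∃ x2 ∈ A2, ∃ y ∈ I b, ∃ y' ∈ I b, y ≠ y' ∧
      G.θ x1 y ≠ 1 ∧ G.θ x2 y' ≠ 1 ∧ G.θ x1 y' ≠ -1 ∧ G.θ x2 y ≠ -1 := by
    rintro ⟨x1, hx1, x2, hx2, y, hy, y', hy', hyy', t1, t2, t3, t4⟩
    apply hno
    have hx1y : x1 ≠ y := hdisjAB.ne_of_mem (hA1sub hx1) hy
    have hx2y' : x2 ≠ y' := hdisjAB.ne_of_mem (hA2sub hx2) hy'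
    have hx2y : x2 ≠ y := hdisjAB.ne_of_mem (hA2sub hx2) hy
    have hx1y' : x1 ≠ y' := hdisjAB.ne_of_mem (hA1sub hx1) hy'
    have hx12 : x1 ≠ x2 := hAd.ne_of_mem hx1 hx2
    have e1 : G.θ x1 y = 0 ∨ G.θ x1 y = -1 := by
      rcases G.range_mem x1 y with h | h | h
      · exact absurd h t1
      · exact Or.inl h
      · exact Or.inr h
    have e2 : G.θ x2 y' = 0 ∨ G.θ x2 y' = -1 := by
      rcases G.range_mem x2 y' with h | h | h
      · exact absurd h t2
      · exact Or.inl h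
      · exact Or.inr h
    have e3 : G.θ x2 y = 1 ∨ G.θ x2 y = 0 := by
      rcases G.range_mem x2 y with h | h | h
      · exact Or.inl h
      · exact Or.inr h
      · exact absurd h t4
    have e4 : G.θ y' x1 = 1 ∨ G.θ y' x1 = 0 := by
      rcases G.range_mem x1 y' with h | h | h
      · exact Or.inl (by rw [G.symm]; exact h)
      · exact Or.inr (by rw [G.symm]; exact h)
      · exact absurd h t3
    refine ⟨x1, x2, y, y', ⟨⟨hx1y, e1⟩, ⟨hx2y', e2⟩,
      ⟨hx12, Or.inl (hAcl (hA1sub hx1) (hA2sub hx2) hx12)⟩,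
      ⟨hx2y, e3⟩, ⟨hyy', Or.inl (hBcl hy hy' hyy')⟩, ⟨hx1y'.symm, e4⟩⟩, ?_, ?_, ?_⟩
    · intro z hz
      simp only [Set.mem_insert_iff, Set.mem_singleton_iff] at hz
      rcases hz with rfl | rfl | rfl | rfl
      · exact Or.inl (hA1sub hx1)
      · exact Or.inl (hA2sub hx2)
      · exact Or.inr hy
      · exact Or.inr hy'
    · exact ⟨x1, by simp, hx1⟩
    · exact ⟨x2, by simp, hx2⟩
  obtain ⟨Ah1, Ah2, Bh1, Bh2, g1, g2, g3, g4, g5, g6, g7, g8, gb1, gb2, gm1, gm2⟩ :=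
    fcl2 G (I a) (I b) A1 A2 hdisjAB hA1 hA2 hAu hAd hrow hcol hnocross
  refine split2 hopt hab g1 g2 g3 g4 g5 g6 g7 g8 (fun x hx y hy => gb1 x hx y hy)
    (fun x hx y hy => gb2 x hx y hy) ⟨?_, ?_⟩ ⟨?_, ?_⟩
  · intro h
    obtain ⟨x, hx, y, hy, t⟩ := gm1.1
    exact t (h x hx y hy)
  · intro h
    obtain ⟨x, hx, y, hy, t⟩ := gm1.2
    exact t (h x hx y hy)
  · intro h
    obtain ⟨x, hx, y, hy, t⟩ := gm2.1
    exact t (h x hx y hy)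
  · intro h
    obtain ⟨x, hx, y, hy, t⟩ := gm2.2
    exact t (h x hx y hy)

end SideMain

end Aux16

end Trigraph
/-- In an optimal antithickening of a connected non-degenerate trigraph,
the preimage of any semiedge is either a semiedge of G or a square-connected homogeneous
pair of strong cliques of G. -/
theorem semiedge_image_squareConnected {V V' : Type} [Fintype V] [Fintype V']
    (G : Trigraph V) (hconn : G.Connected) (hnd : G.NonDegenerate)
    (G' : Trigraph V') (I : V' → Set V) (hopt : G.OptimalAntithickening G' I)
    (a b : V') (hab : G'.SemiAdj a b) :
    (∃ x y : V, I a = {x} ∧ I b = {y} ∧ G.SemiAdj x y) ∨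
      G.SquareConnected (I a) (I b) := by
  classical
  obtain ⟨hIprop, hIdisj, hIcov, hIadj⟩ := hopt.1
  have hneab : a ≠ b := hab.1
  have hmixed := (hIadj a b hneab).2.2 hab
  have hdisjAB : Disjoint (I a) (I b) := hIdisj a b hneab
  by_cases hsing : (∃ x, I a = {x}) ∧ (∃ y, I b = {y})
  · left
    obtain ⟨⟨x, hx⟩, ⟨y, hy⟩⟩ := hsing
    have hxA : x ∈ I a := by rw [hx]; rfl
    have hyB : y ∈ I b := by rw [hy]; rfl
    have hne : x ≠ y := hdisjAB.ne_of_mem hxA hyB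
    refine ⟨x, y, hx, hy, hne, ?_⟩
    rcases G.range_mem x y with h | h | h
    · exfalso
      refine hmixed.1 fun u hu v hv => ?_
      rw [hx, Set.mem_singleton_iff] at hu
      rw [hy, Set.mem_singleton_iff] at hv
      subst hu
      subst hv
      exact h
    · exact h
    · exfalso
      refine hmixed.2 fun u hu v hv => ?_
      rw [hx, Set.mem_singleton_iff] at hu
      rw [hy, Set.mem_singleton_iff] at hv
      subst hu
      subst hv
      exact h
  · right
    have hba : G'.SemiAdj b a := ⟨hneab.symm, by rw [G'.symm]; exact hab.2⟩
    refine ⟨⟨(hIprop a).1, (hIprop b).1, hdisjAB, (hIprop a).2, (hIprop b).2,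
      fun ⟨x, y, hx, hy⟩ => hsing ⟨⟨x, hx⟩, ⟨y, hy⟩⟩, ?_⟩, ?_, ?_⟩
    · intro v hv
      have hv' : v ∈ ⋃ c, I c := by rw [hIcov]; trivial
      rw [Set.mem_iUnion] at hv'
      obtain ⟨c, hc⟩ := hv'
      have hca : c ≠ a := fun h => hv (Or.inl (h ▸ hc))
      have hcb : c ≠ b := fun h => hv (Or.inr (h ▸ hc))
      have hsubv : ({v} : Set V) ⊆ I c := fun u hu => by
        rw [Set.mem_singleton_iff] at hu
        exact hu ▸ hc
      constructor
      · rcases G'.range_mem c a with h | h | h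
        · exact Or.inl (Trigraph.Aux16.sc_mono ((hIadj c a hca).1 h) hsubv subset_rfl)
        · exact absurd (by rw [G'.symm]; exact h)
            (G'.semi_matching a b c hneab (Ne.symm hca) (Ne.symm hcb) hab.2)
        · exact Or.inr (Trigraph.Aux16.sa_mono ((hIadj c a hca).2.1 h) hsubv subset_rfl)
      · rcases G'.range_mem c b with h | h | h
        · exact Or.inl (Trigraph.Aux16.sc_mono ((hIadj c b hcb).1 h) hsubv subset_rfl)
        · exact absurd (by rw [G'.symm]; exact h)
            (G'.semi_matching b a c hneab.symm (Ne.symm hcb) (Ne.symm hca)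
              (by rw [G'.symm]; exact hab.2))
        · exact Or.inr (Trigraph.Aux16.sa_mono ((hIadj c b hcb).2.1 h) hsubv subset_rfl)
    · exact Trigraph.Aux16.side hopt hab
    · intro B1 B2 h1 h2 h3 h4
      have := Trigraph.Aux16.side hopt hba B1 B2 h1 h2 h3 h4
      rwa [Set.union_comm] at this
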